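/- arXiv:2005.02755 — 3 statements merged into one kernel-verified Lean document; each statement's English description precedes it below -/
import Mathlib

section
/- For every u in H¹(0,1), sup_{x ∈ [0,1]} |u(x)| ≤ c₁ ‖u‖_{H¹(0,1)}, where c₁ = (tanh 1)^(-1/2) and ‖u‖²_{H¹} = ‖u‖²_{L²} + ‖u'‖²_{L²}. -/
open MeasureTheory

/-- `u` is an `H¹` function on `(0,1)` with weak derivative `u'`. -/
def IsH1 (u u' : ℝ → ℝ) : Prop :=
  ContinuousOn u (Set.Icc 0 1) ∧
  IntervalIntegrable u' volume 0 1 ∧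
  IntervalIntegrable (fun t => u' t ^ 2) volume 0 1 ∧
  ∀ x ∈ Set.Icc (0:ℝ) 1, u x = u 0 + ∫ t in (0:ℝ)..x, u' t

/-- The constant `c₁ = (tanh 1)^(-1/2)`. -/
noncomputable def c1 : ℝ := (Real.tanh 1) ^ (-(1/2) : ℝ)

/-- The `H¹(0,1)` norm of `u` with weak derivative `u'`. -/
noncomputable def H1norm (u u' : ℝ → ℝ) : ℝ :=
  Real.sqrt ((∫ x in (0:ℝ)..1, u x ^ 2) + ∫ x in (0:ℝ)..1, u' x ^ 2)

open Set in
lemma my_swap (a b : ℝ) (hab : a ≤ b) (w g : ℝ → ℝ) (hw : Continuous w)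
    (hg : IntegrableOn g (Ioc a b)) :
    ∫ t in a..b, w t * ∫ s in a..t, g s = ∫ s in a..b, (∫ t in s..b, w t) * g s := by
  set μ := volume.restrict (Ioc a b) with hμ
  have hmeas : MeasurableSet {p : ℝ × ℝ | p.2 ≤ p.1} :=
    measurableSet_le measurable_snd measurable_fst
  set F : ℝ × ℝ → ℝ := fun p => {p : ℝ × ℝ | p.2 ≤ p.1}.indicator (fun p => w p.1 * g p.2) p
    with hF
  have hwint : Integrable w μ := by
    apply (hw.integrableOn_Icc (a := a) (b := b)).mono_set Ioc_subset_Icc_self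
  have hbase : Integrable (fun p : ℝ × ℝ => w p.1 * g p.2) (μ.prod μ) :=
    Integrable.mul_prod hwint hg
  have hFint : Integrable F (μ.prod μ) := hbase.indicator hmeas
  have hL : ∀ t ∈ Ioc a b, (∫ s, F (t, s) ∂μ) = w t * ∫ s in a..t, g s := by
    intro t ht
    have h1 : ∀ s : ℝ, F (t, s) = (Iic t).indicator (fun s => w t * g s) s := by
      intro s
      simp only [hF, Set.indicator_apply, mem_setOf_eq, mem_Iic]
    simp only [h1]
    rw [hμ, setIntegral_indicator measurableSet_Iic]
    have : Ioc a b ∩ Iic t = Ioc a t := by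
      ext s; simp only [mem_inter_iff, mem_Ioc, mem_Iic]
      constructor
      · rintro ⟨⟨h1, h2⟩, h3⟩; exact ⟨h1, h3⟩
      · rintro ⟨h1, h2⟩; exact ⟨⟨h1, h2.trans ht.2⟩, h2⟩
    rw [this, intervalIntegral.integral_of_le ht.1.le, integral_const_mul]
  have hR : ∀ s ∈ Ioc a b, (∫ t, F (t, s) ∂μ) = (∫ t in s..b, w t) * g s := by
    intro s hs
    have h1 : ∀ t : ℝ, F (t, s) = (Ici s).indicator (fun t => w t * g s) t := by
      intro t
      simp only [hF, Set.indicator_apply, mem_setOf_eq, mem_Ici]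
    simp only [h1]
    rw [hμ, setIntegral_indicator measurableSet_Ici]
    have : Ioc a b ∩ Ici s = Icc s b := by
      ext t; simp only [mem_inter_iff, mem_Ioc, mem_Icc, mem_Ici]
      constructor
      · rintro ⟨⟨h1, h2⟩, h3⟩; exact ⟨h3, h2⟩
      · rintro ⟨h1, h2⟩; exact ⟨⟨hs.1.trans_le h1, h2⟩, h1⟩
    rw [this, MeasureTheory.integral_Icc_eq_integral_Ioc,
      ← intervalIntegral.integral_of_le hs.2, intervalIntegral.integral_mul_const]
  calc ∫ t in a..b, w t * ∫ s in a..t, g s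
      = ∫ t, (∫ s, F (t, s) ∂μ) ∂μ := by
        rw [intervalIntegral.integral_of_le hab]
        exact (setIntegral_congr_fun measurableSet_Ioc (fun t ht => (hL t ht).symm))
    _ = ∫ s, (∫ t, F (t, s) ∂μ) ∂μ := integral_integral_swap hFint
    _ = ∫ s in a..b, (∫ t in s..b, w t) * g s := by
        rw [intervalIntegral.integral_of_le hab]
        exact setIntegral_congr_fun measurableSet_Ioc (fun s hs => hR s hs)

open Set in
lemma amgm (lam a b c d : ℝ) (hl : 0 < lam) :
    |a * b + c * d| ≤ lam / 2 * (a ^ 2 + c ^ 2) + 1 / (2 * lam) * (b ^ 2 + d ^ 2) := by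
  have h1 : |a * b + c * d| ≤ |a| * |b| + |c| * |d| := by
    calc |a * b + c * d| ≤ |a * b| + |c * d| := abs_add_le _ _
    _ = |a| * |b| + |c| * |d| := by rw [abs_mul, abs_mul]
  have h2 : lam * (|a| * |b|) ≤ lam ^ 2 * a ^ 2 / 2 + b ^ 2 / 2 := by
    nlinarith [sq_nonneg (lam * |a| - |b|), sq_abs a, sq_abs b]
  have h3 : lam * (|c| * |d|) ≤ lam ^ 2 * c ^ 2 / 2 + d ^ 2 / 2 := by
    nlinarith [sq_nonneg (lam * |c| - |d|), sq_abs c, sq_abs d]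
  have hl' : (0:ℝ) < 2 * lam := by linarith
  have h4 : |a * b + c * d| * (2 * lam) ≤ lam ^ 2 * (a ^ 2 + c ^ 2) + (b ^ 2 + d ^ 2) := by
    nlinarith [h1, h2, h3]
  have h5 : |a * b + c * d| ≤ (lam ^ 2 * (a ^ 2 + c ^ 2) + (b ^ 2 + d ^ 2)) / (2 * lam) :=
    (le_div_iff₀ hl').mpr h4
  calc |a * b + c * d| ≤ (lam ^ 2 * (a ^ 2 + c ^ 2) + (b ^ 2 + d ^ 2)) / (2 * lam) := h5
    _ = lam / 2 * (a ^ 2 + c ^ 2) + 1 / (2 * lam) * (b ^ 2 + d ^ 2) := by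
        field_simp

open Set in
lemma key_left (u u' : ℝ → ℝ)
    (hc : ContinuousOn u (Icc 0 1)) (h1 : IntervalIntegrable u' volume 0 1)
    (h2 : IntervalIntegrable (fun t => u' t ^ 2) volume 0 1)
    (hrep : ∀ x ∈ Icc (0:ℝ) 1, u x = u 0 + ∫ t in (0:ℝ)..x, u' t)
    (x : ℝ) (hx : x ∈ Icc (0:ℝ) 1) :
    Real.tanh x * u x ^ 2 ≤ ∫ t in (0:ℝ)..x, (u t ^ 2 + u' t ^ 2) := by
  obtain ⟨hx0, hx1⟩ := hx
  have hsub : uIcc (0:ℝ) x ⊆ uIcc (0:ℝ) 1 := by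
    rw [uIcc_of_le hx0, uIcc_of_le (by norm_num : (0:ℝ) ≤ 1)]
    exact Icc_subset_Icc le_rfl hx1
  have hIcc : uIcc (0:ℝ) x ⊆ Icc 0 1 := by
    rw [uIcc_of_le hx0]; exact Icc_subset_Icc le_rfl hx1
  -- integrability facts on [0, x]
  have iu : IntervalIntegrable u volume 0 x :=
    (hc.mono hIcc).intervalIntegrable
  have iu2 : IntervalIntegrable (fun t => u t ^ 2) volume 0 x :=
    ((hc.mono hIcc).pow 2).intervalIntegrable
  have iu' : IntervalIntegrable u' volume 0 x := h1.mono_set hsub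
  have iu'2 : IntervalIntegrable (fun t => u' t ^ 2) volume 0 x := h2.mono_set hsub
  have iI : IntervalIntegrable (fun t => u t ^ 2 + u' t ^ 2) volume 0 x := iu2.add iu'2
  set I := ∫ t in (0:ℝ)..x, (u t ^ 2 + u' t ^ 2) with hI
  have hInn : 0 ≤ I := intervalIntegral.integral_nonneg hx0 (fun t _ => by positivity)
  rcases eq_or_lt_of_le hx0 with h0 | h0
  · subst h0
    rw [hI]
    simp
  -- now 0 < x
  set S := Real.sinh x with hS
  have hSpos : 0 < S := by rw [hS]; exact Real.sinh_pos_iff.mpr h0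
  set w : ℝ → ℝ := fun t => Real.cosh t / S with hw
  set W : ℝ → ℝ := fun t => Real.sinh t / S with hWdef
  have hwc : Continuous w := Real.continuous_cosh.div_const S
  have hWc : Continuous W := Real.continuous_sinh.div_const S
  have hcoshint : ∀ s r : ℝ, ∫ t in s..r, Real.cosh t = Real.sinh r - Real.sinh s := by
    intro s r
    apply intervalIntegral.integral_eq_sub_of_hasDerivAt
    · exact fun t _ => Real.hasDerivAt_sinh t
    · exact Real.continuous_cosh.intervalIntegrable s r
  have hwint : ∀ s r : ℝ, ∫ t in s..r, w t = (Real.sinh r - Real.sinh s) / S := by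
    intro s r
    rw [hw]
    simp only [intervalIntegral.integral_div, hcoshint]
  -- interval integrability of the combination
  have iwu : IntervalIntegrable (fun t => w t * u t) volume 0 x :=
    IntervalIntegrable.continuousOn_mul iu hwc.continuousOn
  have iWu' : IntervalIntegrable (fun t => W t * u' t) volume 0 x :=
    IntervalIntegrable.continuousOn_mul iu' hWc.continuousOn
  -- representation
  have hrepx : u x = ∫ t in (0:ℝ)..x, (w t * u t + W t * u' t) := by
    have hGint : IntegrableOn u' (Ioc 0 x) := iu'.1
    have hswap := my_swap 0 x hx0 w u' hwc hGint
    have step1 : ∫ t in (0:ℝ)..x, w t * u t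
        = ∫ t in (0:ℝ)..x, (w t * u 0 + w t * ∫ s in (0:ℝ)..t, u' s) := by
      apply intervalIntegral.integral_congr
      intro t ht
      show w t * u t = w t * u 0 + w t * ∫ s in (0:ℝ)..t, u' s
      rw [hrep t (hIcc ht)]; ring
    have step2 : ∫ s in (0:ℝ)..x, (∫ t in s..x, w t) * u' s
        = ∫ s in (0:ℝ)..x, (u' s - W s * u' s) := by
      apply intervalIntegral.integral_congr
      intro s _
      show (∫ t in s..x, w t) * u' s = u' s - W s * u' s
      rw [hwint s x]
      have hws : (Real.sinh x - Real.sinh s) / S = 1 - W s := by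
        rw [hWdef]; field_simp; rw [hS]
      rw [hws]; ring
    have iw0 : IntervalIntegrable (fun t => w t * u 0) volume 0 x :=
      (hwc.mul continuous_const).intervalIntegrable 0 x
    have iwG : IntervalIntegrable (fun t => w t * ∫ s in (0:ℝ)..t, u' s) volume 0 x := by
      have hGc : ContinuousOn (fun t => ∫ s in (0:ℝ)..t, u' s) (uIcc 0 x) := by
        apply intervalIntegral.continuousOn_primitive_interval
        rw [uIcc_of_le hx0, integrableOn_Icc_iff_integrableOn_Ioc]
        exact iu'.1
      exact IntervalIntegrable.continuousOn_mul (hGc.intervalIntegrable) hwc.continuousOn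
    rw [intervalIntegral.integral_add iwu iWu', step1,
      intervalIntegral.integral_add iw0 iwG, hswap, step2,
      intervalIntegral.integral_sub iu' iWu']
    have e1 : ∫ t in (0:ℝ)..x, w t * u 0 = u 0 := by
      rw [intervalIntegral.integral_mul_const, hwint 0 x]
      rw [Real.sinh_zero]
      field_simp
      rw [sub_zero, hS]
    have e2 : ∫ t in (0:ℝ)..x, u' t = u x - u 0 := by
      have := hrep x ⟨hx0, hx1⟩; linarith
    rw [e1, e2]; ring
  -- the weighted-square integral
  have hCint : ∫ t in (0:ℝ)..x, (w t ^ 2 + W t ^ 2) = Real.cosh x / S := by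
    have hfun : ∀ t : ℝ, w t ^ 2 + W t ^ 2
        = (Real.cosh t * Real.cosh t + Real.sinh t * Real.sinh t) / S ^ 2 := by
      intro t; rw [hw, hWdef]; field_simp
    have hftc : ∫ t in (0:ℝ)..x, (Real.cosh t * Real.cosh t + Real.sinh t * Real.sinh t)
        = Real.sinh x * Real.cosh x := by
      have : Real.sinh x * Real.cosh x
          = Real.sinh x * Real.cosh x - Real.sinh 0 * Real.cosh 0 := by simp
      rw [this]
      apply intervalIntegral.integral_eq_sub_of_hasDerivAt
      · intro t _
        exact (Real.hasDerivAt_sinh t).mul (Real.hasDerivAt_cosh t)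
      · exact ((Real.continuous_cosh.mul Real.continuous_cosh).add
          (Real.continuous_sinh.mul Real.continuous_sinh)).intervalIntegrable 0 x
    simp only [hfun]
    rw [intervalIntegral.integral_div, hftc]
    rw [hS]
    have : Real.sinh x ≠ 0 := ne_of_gt hSpos
    field_simp
  set C := Real.cosh x / S with hC
  have hCpos : 0 < C := div_pos (Real.cosh_pos x) hSpos
  -- the lambda bound
  have hlam : ∀ lam : ℝ, 0 < lam → |u x| ≤ lam / 2 * C + 1 / (2 * lam) * I := by
    intro lam hl
    rw [hrepx]
    calc |∫ t in (0:ℝ)..x, (w t * u t + W t * u' t)|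
        ≤ ∫ t in (0:ℝ)..x, |w t * u t + W t * u' t| :=
          intervalIntegral.abs_integral_le_integral_abs hx0
      _ ≤ ∫ t in (0:ℝ)..x,
            (lam / 2 * (w t ^ 2 + W t ^ 2) + 1 / (2 * lam) * (u t ^ 2 + u' t ^ 2)) := by
          apply intervalIntegral.integral_mono_on hx0
          · exact (iwu.add iWu').abs
          · exact (((hwc.pow 2).add (hWc.pow 2)).intervalIntegrable 0 x).const_mul (lam/2)
              |>.add (iI.const_mul (1 / (2 * lam)))
          · intro t _
            exact amgm lam (w t) (u t) (W t) (u' t) hl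
      _ = lam / 2 * C + 1 / (2 * lam) * I := by
          rw [intervalIntegral.integral_add (f := fun t => lam / 2 * (w t ^ 2 + W t ^ 2))
            (g := fun t => 1 / (2 * lam) * (u t ^ 2 + u' t ^ 2))
            ((((hwc.pow 2).add (hWc.pow 2)).intervalIntegrable 0 x).const_mul (lam/2))
            (iI.const_mul (1 / (2 * lam)))]
          rw [intervalIntegral.integral_const_mul, intervalIntegral.integral_const_mul,
            hCint]
  -- conclude u x ^ 2 ≤ C * I
  have hsq : u x ^ 2 ≤ C * I := by
    rcases eq_or_ne (u x) 0 with h | h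
    · simpa [h] using mul_nonneg hCpos.le hInn
    · have habs : 0 < |u x| := abs_pos.mpr h
      have hl : 0 < |u x| / C := div_pos habs hCpos
      have hb := hlam (|u x| / C) hl
      have hCne : C ≠ 0 := ne_of_gt hCpos
      have hune : |u x| ≠ 0 := ne_of_gt habs
      have e : |u x| / C / 2 * C + 1 / (2 * (|u x| / C)) * I
          = |u x| / 2 + C * I / (2 * |u x|) := by
        field_simp
      rw [e] at hb
      have h3 : |u x| / 2 ≤ C * I / (2 * |u x|) := by linarith
      have h4 : |u x| * (2 * |u x|) ≤ C * I * 2 :=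
        (div_le_div_iff₀ two_pos (by positivity)).mp h3
      nlinarith [h4, sq_abs (u x)]
  -- finish: tanh x * u x ^ 2 ≤ I
  have htanh : Real.tanh x = Real.sinh x / Real.cosh x := Real.tanh_eq_sinh_div_cosh x
  have hcpos := Real.cosh_pos x
  rw [htanh, hS] at *
  rw [hC, hS] at hsq
  calc Real.sinh x / Real.cosh x * u x ^ 2
      ≤ Real.sinh x / Real.cosh x * (Real.cosh x / Real.sinh x * I) := by
        apply mul_le_mul_of_nonneg_left hsq (by positivity)
    _ = I := by field_simp

lemma tanh_subadd (a b : ℝ) (ha : 0 ≤ a) (hb : 0 ≤ b) :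
    Real.tanh (a + b) ≤ Real.tanh a + Real.tanh b := by
  have hca := Real.cosh_pos a
  have hcb := Real.cosh_pos b
  have hcab := Real.cosh_pos (a + b)
  have hsa : 0 ≤ Real.sinh a := Real.sinh_nonneg_iff.mpr ha
  have hsb : 0 ≤ Real.sinh b := Real.sinh_nonneg_iff.mpr hb
  have hsab : 0 ≤ Real.sinh (a + b) := Real.sinh_nonneg_iff.mpr (by linarith)
  rw [Real.tanh_eq_sinh_div_cosh, Real.tanh_eq_sinh_div_cosh, Real.tanh_eq_sinh_div_cosh,
    div_add_div _ _ (ne_of_gt hca) (ne_of_gt hcb), ← Real.sinh_add]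
  have hprod : Real.cosh a * Real.cosh b ≤ Real.cosh (a + b) := by
    rw [Real.cosh_add]; nlinarith
  gcongr

theorem sup_le_c1_H1norm (u u' : ℝ → ℝ) (hu : IsH1 u u') :
    ∀ x ∈ Set.Icc (0:ℝ) 1, |u x| ≤ c1 * H1norm u u' := by
  obtain ⟨hc, h1, h2, hrep⟩ := hu
  intro x hx
  obtain ⟨hx0, hx1⟩ := hx
  have hleft := key_left u u' hc h1 h2 hrep x ⟨hx0, hx1⟩
  -- reflected function
  set v : ℝ → ℝ := fun t => u (1 - t) with hv
  set v' : ℝ → ℝ := fun t => -u' (1 - t) with hv'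
  have hmap : Set.MapsTo (fun t : ℝ => 1 - t) (Set.Icc 0 1) (Set.Icc 0 1) := by
    intro t ht
    simp only [Set.mem_Icc] at ht ⊢
    constructor <;> linarith [ht.1, ht.2]
  have hcv : ContinuousOn v (Set.Icc 0 1) :=
    hc.comp ((continuous_const.sub continuous_id).continuousOn) hmap
  have h1v : IntervalIntegrable v' volume 0 1 := by
    have h := (h1.comp_sub_left 1)
    simp only [sub_zero, sub_self] at h
    exact h.symm.neg
  have h2v : IntervalIntegrable (fun t => v' t ^ 2) volume 0 1 := by
    have h := (h2.comp_sub_left 1)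
    simp only [sub_zero, sub_self] at h
    have he : (fun t : ℝ => v' t ^ 2) = fun t => (fun s => u' s ^ 2) (1 - t) := by
      funext t; simp [hv']
    rw [he]
    exact h.symm
  have hrepv : ∀ y ∈ Set.Icc (0:ℝ) 1, v y = v 0 + ∫ t in (0:ℝ)..y, v' t := by
    intro y hy
    have hy1 : (1:ℝ) - y ∈ Set.Icc (0:ℝ) 1 := hmap hy
    have e1 : ∫ t in (0:ℝ)..y, v' t = -(∫ t in (0:ℝ)..y, u' (1 - t)) := by
      rw [hv']
      exact intervalIntegral.integral_neg
    have e2 : ∫ t in (0:ℝ)..y, u' (1 - t) = ∫ s in (1 - y)..(1:ℝ), u' s := by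
      have h := intervalIntegral.integral_comp_sub_left (a := 0) (b := y) u' 1
      simpa using h
    have i1 : IntervalIntegrable u' volume 0 (1 - y) := by
      apply h1.mono_set
      rw [Set.uIcc_of_le hy1.1, Set.uIcc_of_le (by norm_num : (0:ℝ) ≤ 1)]
      exact Set.Icc_subset_Icc le_rfl hy1.2
    have e3 : (∫ t in (0:ℝ)..1, u' t) - ∫ t in (0:ℝ)..(1 - y), u' t
        = ∫ s in (1 - y)..(1:ℝ), u' s :=
      intervalIntegral.integral_interval_sub_left h1 i1
    have r1 := hrep 1 ⟨by norm_num, le_rfl⟩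
    have r2 := hrep (1 - y) hy1
    have : v y = u (1 - y) := rfl
    have hv0 : v 0 = u 1 := by rw [hv]; norm_num
    rw [this, hv0, e1, e2, ← e3]
    linarith [r1, r2]
  have hright0 := key_left v v' hcv h1v h2v hrepv (1 - x) (hmap ⟨hx0, hx1⟩)
  have hvx : v (1 - x) = u x := by rw [hv]; norm_num
  have hrhs : ∫ t in (0:ℝ)..(1 - x), (v t ^ 2 + v' t ^ 2)
      = ∫ s in x..(1:ℝ), (u s ^ 2 + u' s ^ 2) := by
    have he : (fun t : ℝ => v t ^ 2 + v' t ^ 2)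
        = fun t => (fun s => u s ^ 2 + u' s ^ 2) (1 - t) := by
      funext t; simp [hv, hv']
    rw [he]
    have h := intervalIntegral.integral_comp_sub_left (a := 0) (b := 1 - x)
      (fun s => u s ^ 2 + u' s ^ 2) 1
    simpa [sub_sub_cancel] using h
  rw [hvx, hrhs] at hright0
  -- combine
  have hu2int : IntervalIntegrable (fun t => u t ^ 2) volume 0 1 := by
    apply ContinuousOn.intervalIntegrable
    rw [Set.uIcc_of_le (by norm_num : (0:ℝ) ≤ 1)]
    exact hc.pow 2
  have hIint : IntervalIntegrable (fun t => u t ^ 2 + u' t ^ 2) volume 0 1 := hu2int.add h2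
  have hsub1 : Set.uIcc (0:ℝ) x ⊆ Set.uIcc (0:ℝ) 1 := by
    rw [Set.uIcc_of_le hx0, Set.uIcc_of_le (by norm_num : (0:ℝ) ≤ 1)]
    exact Set.Icc_subset_Icc le_rfl hx1
  have hsub2 : Set.uIcc x (1:ℝ) ⊆ Set.uIcc (0:ℝ) 1 := by
    rw [Set.uIcc_of_le hx1, Set.uIcc_of_le (by norm_num : (0:ℝ) ≤ 1)]
    exact Set.Icc_subset_Icc hx0 le_rfl
  have hsplit : (∫ t in (0:ℝ)..x, (u t ^ 2 + u' t ^ 2))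
      + ∫ t in x..(1:ℝ), (u t ^ 2 + u' t ^ 2)
      = ∫ t in (0:ℝ)..1, (u t ^ 2 + u' t ^ 2) :=
    intervalIntegral.integral_add_adjacent_intervals (hIint.mono_set hsub1)
      (hIint.mono_set hsub2)
  have hsum : (∫ t in (0:ℝ)..1, (u t ^ 2 + u' t ^ 2))
      = (∫ t in (0:ℝ)..1, u t ^ 2) + ∫ t in (0:ℝ)..1, u' t ^ 2 :=
    intervalIntegral.integral_add hu2int h2
  set S := (∫ t in (0:ℝ)..1, u t ^ 2) + ∫ t in (0:ℝ)..1, u' t ^ 2 with hSdef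
  have hS0 : 0 ≤ S := by
    have a1 : 0 ≤ ∫ t in (0:ℝ)..1, u t ^ 2 :=
      intervalIntegral.integral_nonneg (by norm_num) (fun t _ => sq_nonneg _)
    have a2 : 0 ≤ ∫ t in (0:ℝ)..1, u' t ^ 2 :=
      intervalIntegral.integral_nonneg (by norm_num) (fun t _ => sq_nonneg _)
    rw [hSdef]; linarith
  have htanh : Real.tanh 1 ≤ Real.tanh x + Real.tanh (1 - x) := by
    have h := tanh_subadd x (1 - x) hx0 (by linarith)
    simpa using h
  have hT : 0 < Real.tanh 1 := by
    rw [Real.tanh_eq_sinh_div_cosh]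
    exact div_pos (Real.sinh_pos_iff.mpr one_pos) (Real.cosh_pos 1)
  have hux2 : 0 ≤ u x ^ 2 := sq_nonneg _
  have hmain : Real.tanh 1 * u x ^ 2 ≤ S := by
    have b1 : Real.tanh 1 * u x ^ 2 ≤ (Real.tanh x + Real.tanh (1 - x)) * u x ^ 2 :=
      mul_le_mul_of_nonneg_right htanh hux2
    have b2 : (Real.tanh x + Real.tanh (1 - x)) * u x ^ 2
        ≤ (∫ t in (0:ℝ)..x, (u t ^ 2 + u' t ^ 2))
          + ∫ t in x..(1:ℝ), (u t ^ 2 + u' t ^ 2) := by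
      rw [add_mul]
      exact add_le_add hleft hright0
    rw [hsplit, hsum] at b2
    linarith
  have hdiv : u x ^ 2 ≤ S / Real.tanh 1 := by
    rw [le_div_iff₀ hT]
    linarith [hmain]
  calc |u x| = Real.sqrt (u x ^ 2) := (Real.sqrt_sq_eq_abs _).symm
    _ ≤ Real.sqrt (S / Real.tanh 1) := Real.sqrt_le_sqrt hdiv
    _ = Real.sqrt S / Real.sqrt (Real.tanh 1) := Real.sqrt_div hS0 _
    _ = c1 * H1norm u u' := by
        rw [c1, H1norm, Real.rpow_neg hT.le, ← Real.sqrt_eq_rpow, ← hSdef,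
          div_eq_mul_inv, mul_comm]
end

section
/- Let u ∈ H²(0,1) with u'(0) = u'(1) = 0. Then for all x ∈ [0,1], √(u(x)² + u'(x)²) ≤ c₁ ‖u‖_{H²(0,1)}, where c₁ = (tanh 1)^(-1/2). -/
open MeasureTheory

/-- The `H²(0,1)` norm of `u` with weak derivatives `u'`, `u''`. -/
noncomputable def H2norm (u u' u'' : ℝ → ℝ) : ℝ :=
  Real.sqrt ((∫ x in (0:ℝ)..1, u x ^ 2) + (∫ x in (0:ℝ)..1, u' x ^ 2) +
    ∫ x in (0:ℝ)..1, u'' x ^ 2)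

/-- Fubini for the triangle `a ≤ s ≤ t ≤ b`. -/
lemma fubini_tri (f g : ℝ → ℝ) (a b : ℝ) (hab : a ≤ b)
    (hf : IntervalIntegrable f volume a b) (hg : Continuous g) :
    ∫ t in a..b, (∫ s in a..t, f s) * g t = ∫ s in a..b, f s * (∫ t in s..b, g t) := by
  set μ : Measure ℝ := volume.restrict (Set.Ioc a b) with hμ
  have hfi : Integrable f μ := hf.1
  have hgi : Integrable g μ := hg.integrableOn_Ioc
  set T : Set (ℝ × ℝ) := {p : ℝ × ℝ | p.1 ≤ p.2} with hT
  have hTm : MeasurableSet T := measurableSet_le measurable_fst measurable_snd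
  have hH : Integrable (T.indicator (fun p : ℝ × ℝ => f p.1 * g p.2)) (μ.prod μ) :=
    (hfi.mul_prod hgi).indicator hTm
  have swap := MeasureTheory.integral_integral_swap
    (f := fun s t => T.indicator (fun p : ℝ × ℝ => f p.1 * g p.2) (s, t)) hH
  have inner1 : ∀ s ∈ Set.Ioc a b,
      (∫ t, T.indicator (fun p : ℝ × ℝ => f p.1 * g p.2) (s, t) ∂μ)
        = f s * ∫ t in s..b, g t := by
    intro s hs
    have : (fun t => T.indicator (fun p : ℝ × ℝ => f p.1 * g p.2) (s, t))
        = (Set.Ici s).indicator (fun t => f s * g t) := by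
      funext t
      simp [Set.indicator_apply, hT, Set.mem_Ici]
    rw [this, hμ, MeasureTheory.integral_indicator measurableSet_Ici,
      Measure.restrict_restrict measurableSet_Ici]
    have hset : Set.Ici s ∩ Set.Ioc a b = Set.Icc s b := by
      ext t
      simp only [Set.mem_inter_iff, Set.mem_Ici, Set.mem_Ioc, Set.mem_Icc]
      constructor
      · rintro ⟨h1, _, h3⟩; exact ⟨h1, h3⟩
      · rintro ⟨h1, h2⟩; exact ⟨h1, lt_of_lt_of_le hs.1 h1, h2⟩
    rw [hset, MeasureTheory.integral_Icc_eq_integral_Ioc,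
      ← intervalIntegral.integral_of_le hs.2, intervalIntegral.integral_const_mul]
  have inner2 : ∀ t ∈ Set.Ioc a b,
      (∫ s, T.indicator (fun p : ℝ × ℝ => f p.1 * g p.2) (s, t) ∂μ)
        = (∫ s in a..t, f s) * g t := by
    intro t ht
    have : (fun s => T.indicator (fun p : ℝ × ℝ => f p.1 * g p.2) (s, t))
        = (Set.Iic t).indicator (fun s => f s * g t) := by
      funext s
      simp [Set.indicator_apply, hT, Set.mem_Iic]
    rw [this, hμ, MeasureTheory.integral_indicator measurableSet_Iic,
      Measure.restrict_restrict measurableSet_Iic]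
    have hset : Set.Iic t ∩ Set.Ioc a b = Set.Ioc a t := by
      ext s
      simp only [Set.mem_inter_iff, Set.mem_Iic, Set.mem_Ioc]
      constructor
      · rintro ⟨h1, h2, _⟩; exact ⟨h2, h1⟩
      · rintro ⟨h1, h2⟩; exact ⟨h2, h1, le_trans h2 ht.2⟩
    rw [hset, ← intervalIntegral.integral_of_le (le_of_lt ht.1),
      intervalIntegral.integral_mul_const]
  calc ∫ t in a..b, (∫ s in a..t, f s) * g t
      = ∫ t, (∫ s in a..t, f s) * g t ∂μ := intervalIntegral.integral_of_le hab
    _ = ∫ t, (∫ s, T.indicator (fun p : ℝ × ℝ => f p.1 * g p.2) (s, t) ∂μ) ∂μ := by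
        rw [hμ]
        exact (MeasureTheory.setIntegral_congr_fun measurableSet_Ioc
          (fun t ht => (inner2 t ht).symm))
    _ = ∫ s, (∫ t, T.indicator (fun p : ℝ × ℝ => f p.1 * g p.2) (s, t) ∂μ) ∂μ := swap.symm
    _ = ∫ s, f s * (∫ t in s..b, g t) ∂μ := by
        rw [hμ]
        exact (MeasureTheory.setIntegral_congr_fun measurableSet_Ioc
          (fun s hs => inner1 s hs))
    _ = ∫ s in a..b, f s * (∫ t in s..b, g t) := (intervalIntegral.integral_of_le hab).symm

/-- Fundamental theorem of calculus for the product of an `H¹` function with a `C¹` one. -/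
lemma ftc_prod (v v' : ℝ → ℝ) (hv : IsH1 v v') (g g' : ℝ → ℝ)
    (hg : ∀ t, HasDerivAt g (g' t) t) (hg' : Continuous g')
    (a b : ℝ) (ha : a ∈ Set.Icc (0:ℝ) 1) (hb : b ∈ Set.Icc (0:ℝ) 1) (hab : a ≤ b) :
    ∫ t in a..b, (v' t * g t + v t * g' t) = v b * g b - v a * g a := by
  obtain ⟨hc, hint, _, hrep⟩ := hv
  have hgc : Continuous g := by
    rw [continuous_iff_continuousAt]; exact fun t => (hg t).continuousAt
  have h01 : Set.uIcc (0:ℝ) 1 = Set.Icc 0 1 := Set.uIcc_of_le (by norm_num)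
  have hsub : Set.uIcc a b ⊆ Set.uIcc (0:ℝ) 1 :=
    Set.uIcc_subset_uIcc (h01 ▸ ha) (h01 ▸ hb)
  have hab' : Set.uIcc a b = Set.Icc a b := Set.uIcc_of_le hab
  have hv' : IntervalIntegrable v' volume a b := hint.mono_set hsub
  have hvc : ContinuousOn v (Set.uIcc a b) := hc.mono (h01 ▸ hsub)
  have hgsub : ∀ s t : ℝ, ∫ r in s..t, g' r = g t - g s := fun s t =>
    intervalIntegral.integral_eq_sub_of_hasDerivAt (fun r _ => hg r)
      (hg'.intervalIntegrable s t)
  have hrep' : ∀ t ∈ Set.Icc a b, v t = v a + ∫ s in a..t, v' s := by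
    intro t ht
    have ht01 : t ∈ Set.Icc (0:ℝ) 1 := h01 ▸ hsub (hab' ▸ ht)
    have h1 := hrep t ht01
    have h2 := hrep a ha
    have h3 : (∫ s in (0:ℝ)..t, v' s) - ∫ s in (0:ℝ)..a, v' s = ∫ s in a..t, v' s :=
      intervalIntegral.integral_interval_sub_left
        (hint.mono_set (Set.uIcc_subset_uIcc (h01 ▸ Set.left_mem_Icc.mpr (by norm_num))
          (h01 ▸ ht01)))
        (hint.mono_set (Set.uIcc_subset_uIcc (h01 ▸ Set.left_mem_Icc.mpr (by norm_num))
          (h01 ▸ ha)))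
    rw [h1, h2]; linarith
  have hintvb : ∫ s in a..b, v' s = v b - v a := by
    have := hrep' b (Set.right_mem_Icc.mpr hab); linarith
  have hW : ContinuousOn (fun t => ∫ s in a..t, v' s) (Set.uIcc a b) :=
    intervalIntegral.continuousOn_primitive_interval
      (by rw [hab', integrableOn_Icc_iff_integrableOn_Ioc]; exact hv'.1)
  have hi1 : IntervalIntegrable (fun t => v' t * g t) volume a b :=
    hv'.mul_continuousOn hgc.continuousOn
  have hi2 : IntervalIntegrable (fun t => v t * g' t) volume a b :=
    (hvc.mul hg'.continuousOn).intervalIntegrable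
  have hi3 : IntervalIntegrable (fun t => (∫ s in a..t, v' s) * g' t) volume a b :=
    (hW.mul hg'.continuousOn).intervalIntegrable
  have hi4 : IntervalIntegrable (fun t => v a * g' t) volume a b :=
    (continuous_const.mul hg').intervalIntegrable a b
  have step1 : ∫ t in a..b, v t * g' t
      = v a * (g b - g a) + ∫ t in a..b, (∫ s in a..t, v' s) * g' t := by
    have e1 : ∫ t in a..b, v t * g' t
        = ∫ t in a..b, (v a * g' t + (∫ s in a..t, v' s) * g' t) := by
      apply intervalIntegral.integral_congr
      intro t ht
      rw [hab'] at ht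
      show v t * g' t = v a * g' t + (∫ s in a..t, v' s) * g' t
      rw [hrep' t ht]; ring
    rw [e1, intervalIntegral.integral_add hi4 hi3, intervalIntegral.integral_const_mul,
      hgsub a b]
  have step2 : ∫ t in a..b, (∫ s in a..t, v' s) * g' t
      = g b * (v b - v a) - ∫ t in a..b, v' t * g t := by
    rw [fubini_tri v' g' a b hab hv' hg']
    have e2 : ∫ s in a..b, v' s * (∫ t in s..b, g' t)
        = ∫ s in a..b, (v' s * g b - v' s * g s) := by
      apply intervalIntegral.integral_congr
      intro s _
      show v' s * (∫ t in s..b, g' t) = v' s * g b - v' s * g s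
      rw [hgsub s b]; ring
    rw [e2, intervalIntegral.integral_sub (hv'.mul_const _) hi1,
      intervalIntegral.integral_mul_const, hintvb]
    ring
  rw [intervalIntegral.integral_add hi1 hi2, step1, step2]
  ring

/-- Cauchy–Schwarz for interval integrals. -/
lemma cs_int (f g : ℝ → ℝ) (a b : ℝ) (hab : a ≤ b)
    (hf2 : IntervalIntegrable (fun t => f t ^ 2) volume a b)
    (hg2 : IntervalIntegrable (fun t => g t ^ 2) volume a b)
    (hfg : IntervalIntegrable (fun t => f t * g t) volume a b) :
    (∫ t in a..b, f t * g t) ^ 2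
      ≤ (∫ t in a..b, f t ^ 2) * ∫ t in a..b, g t ^ 2 := by
  set A := ∫ t in a..b, f t ^ 2 with hA
  set B := ∫ t in a..b, f t * g t with hB
  set C := ∫ t in a..b, g t ^ 2 with hC
  have key : ∀ l : ℝ, 0 ≤ A * (l * l) + (2 * B) * l + C := by
    intro l
    have e : ∀ t : ℝ, (l * f t + g t) ^ 2
        = (l * l) * f t ^ 2 + (2 * l) * (f t * g t) + g t ^ 2 := by intro t; ring
    have hnn : 0 ≤ ∫ t in a..b,
        ((l * l) * f t ^ 2 + (2 * l) * (f t * g t) + g t ^ 2) := by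
      apply intervalIntegral.integral_nonneg hab
      intro t _
      rw [← e t]; positivity
    have hsplit : ∫ t in a..b,
        ((l * l) * f t ^ 2 + (2 * l) * (f t * g t) + g t ^ 2)
        = (l * l) * A + (2 * l) * B + C := by
      rw [intervalIntegral.integral_add ((hf2.const_mul _).add (hfg.const_mul _)) hg2,
        intervalIntegral.integral_add (hf2.const_mul _) (hfg.const_mul _),
        intervalIntegral.integral_const_mul, intervalIntegral.integral_const_mul]
    rw [hsplit] at hnn
    nlinarith [hnn]
  have hd := discrim_le_zero key
  rw [discrim] at hd
  nlinarith [hd]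

/-- The key energy bound. -/
lemma sq_bound (v v' : ℝ → ℝ) (hv : IsH1 v v') (g g' : ℝ → ℝ)
    (hg : ∀ t, HasDerivAt g (g' t) t) (hg' : Continuous g')
    (a b : ℝ) (ha : a ∈ Set.Icc (0:ℝ) 1) (hb : b ∈ Set.Icc (0:ℝ) 1) (hab : a ≤ b) :
    (v b * g b - v a * g a) ^ 2
      ≤ (∫ t in a..b, (g t ^ 2 + g' t ^ 2)) * ∫ t in a..b, (v t ^ 2 + v' t ^ 2) := by
  obtain ⟨hc, hint, hint2, hrep⟩ := hv
  have hgc : Continuous g := by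
    rw [continuous_iff_continuousAt]; exact fun t => (hg t).continuousAt
  have h01 : Set.uIcc (0:ℝ) 1 = Set.Icc 0 1 := Set.uIcc_of_le (by norm_num)
  have hsub : Set.uIcc a b ⊆ Set.uIcc (0:ℝ) 1 :=
    Set.uIcc_subset_uIcc (h01 ▸ ha) (h01 ▸ hb)
  have hv' : IntervalIntegrable v' volume a b := hint.mono_set hsub
  have hv2 : IntervalIntegrable (fun t => v' t ^ 2) volume a b := hint2.mono_set hsub
  have hvc : ContinuousOn v (Set.uIcc a b) := hc.mono (h01 ▸ hsub)
  set P : ℝ → ℝ := fun t => Real.sqrt (g t ^ 2 + g' t ^ 2) with hP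
  set Q : ℝ → ℝ := fun t => Real.sqrt (v t ^ 2 + v' t ^ 2) with hQ
  set F : ℝ → ℝ := fun t => v' t * g t + v t * g' t with hF
  have hPsq : ∀ t, P t ^ 2 = g t ^ 2 + g' t ^ 2 := fun t =>
    Real.sq_sqrt (by positivity)
  have hQsq : ∀ t, Q t ^ 2 = v t ^ 2 + v' t ^ 2 := fun t =>
    Real.sq_sqrt (by positivity)
  have hP2 : IntervalIntegrable (fun t => P t ^ 2) volume a b := by
    have : (fun t => P t ^ 2) = fun t => g t ^ 2 + g' t ^ 2 := funext hPsq
    rw [this]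
    exact ((hgc.pow 2).add (hg'.pow 2)).intervalIntegrable a b
  have hQ2 : IntervalIntegrable (fun t => Q t ^ 2) volume a b := by
    have : (fun t => Q t ^ 2) = fun t => v t ^ 2 + v' t ^ 2 := funext hQsq
    rw [this]
    exact ((hvc.pow 2).intervalIntegrable).add hv2
  have hFP : ∀ t, |F t| ≤ P t * Q t := by
    intro t
    have h1 : F t ^ 2 ≤ (g t ^ 2 + g' t ^ 2) * (v t ^ 2 + v' t ^ 2) := by
      have := sq_nonneg (v' t * g' t - v t * g t)
      simp only [hF]; nlinarith
    have h2 : |F t| = Real.sqrt (F t ^ 2) := (Real.sqrt_sq_eq_abs _).symm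
    rw [h2, ← Real.sqrt_mul (by positivity : (0:ℝ) ≤ g t ^ 2 + g' t ^ 2)]
    exact Real.sqrt_le_sqrt h1
  have hQm : AEStronglyMeasurable Q (volume.restrict (Set.uIoc a b)) := by
    have huIoc : Set.uIoc a b = Set.Ioc a b := Set.uIoc_of_le hab
    have hv'm : AEStronglyMeasurable v' (volume.restrict (Set.uIoc a b)) := by
      rw [huIoc]; exact hv'.1.aestronglyMeasurable
    have hvm : AEStronglyMeasurable v (volume.restrict (Set.uIoc a b)) := by
      rw [huIoc]
      exact (hvc.mono (by rw [Set.uIcc_of_le hab]; exact Set.Ioc_subset_Icc_self)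
        ).aestronglyMeasurable measurableSet_Ioc
    exact (Real.continuous_sqrt.comp_aestronglyMeasurable
      (((hvm.pow 2).add (hv'm.pow 2))))
  have hPQ : IntervalIntegrable (fun t => P t * Q t) volume a b := by
    apply IntervalIntegrable.mono_fun
      (hP2.add hQ2 |>.const_mul (1/2 : ℝ))
      ((hgc.pow 2 |>.add (hg'.pow 2)).sqrt.aestronglyMeasurable.restrict.mul hQm)
    filter_upwards with t
    have hPt : 0 ≤ P t := Real.sqrt_nonneg _
    have hQt : 0 ≤ Q t := Real.sqrt_nonneg _
    have : P t * Q t ≤ 1/2 * (P t ^ 2 + Q t ^ 2) := by nlinarith [sq_nonneg (P t - Q t)]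
    simp only [Real.norm_eq_abs, Pi.mul_apply]
    show |P t * Q t| ≤ |1 / 2 * (P t ^ 2 + Q t ^ 2)|
    rw [abs_of_nonneg (mul_nonneg hPt hQt), abs_of_nonneg (by positivity)]
    exact this
  have hFi : IntervalIntegrable F volume a b := by
    apply IntervalIntegrable.add
    · exact hv'.mul_continuousOn hgc.continuousOn
    · exact (hvc.mul hg'.continuousOn).intervalIntegrable
  have e0 : v b * g b - v a * g a = ∫ t in a..b, F t :=
    (ftc_prod v v' ⟨hc, hint, hint2, hrep⟩ g g' hg hg' a b ha hb hab).symm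
  have h1 : |∫ t in a..b, F t| ≤ ∫ t in a..b, P t * Q t := by
    refine le_trans (intervalIntegral.abs_integral_le_integral_abs hab) ?_
    apply intervalIntegral.integral_mono_on hab hFi.abs hPQ
    intro t _
    exact hFP t
  have h2 : (∫ t in a..b, P t * Q t) ^ 2
      ≤ (∫ t in a..b, P t ^ 2) * ∫ t in a..b, Q t ^ 2 := cs_int P Q a b hab hP2 hQ2 hPQ
  have e1 : (∫ t in a..b, P t ^ 2) = ∫ t in a..b, (g t ^ 2 + g' t ^ 2) := by
    apply intervalIntegral.integral_congr; intro t _; exact hPsq t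
  have e2 : (∫ t in a..b, Q t ^ 2) = ∫ t in a..b, (v t ^ 2 + v' t ^ 2) := by
    apply intervalIntegral.integral_congr; intro t _; exact hQsq t
  rw [e0]
  calc (∫ t in a..b, F t) ^ 2 = |∫ t in a..b, F t| ^ 2 := (sq_abs _).symm
    _ ≤ (∫ t in a..b, P t * Q t) ^ 2 := by
        apply pow_le_pow_left₀ (abs_nonneg _) h1
    _ ≤ (∫ t in a..b, P t ^ 2) * ∫ t in a..b, Q t ^ 2 := h2
    _ = _ := by rw [e1, e2]

lemma int_sc (a b : ℝ) : ∫ t in a..b, (Real.sinh t ^ 2 + Real.cosh t ^ 2)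
    = Real.sinh b * Real.cosh b - Real.sinh a * Real.cosh a := by
  apply intervalIntegral.integral_eq_sub_of_hasDerivAt (f := fun t => Real.sinh t * Real.cosh t)
  · intro t _
    have := (Real.hasDerivAt_sinh t).mul (Real.hasDerivAt_cosh t)
    exact this.congr_deriv (by ring)
  · apply Continuous.intervalIntegrable
    exact (Real.continuous_sinh.pow 2).add (Real.continuous_cosh.pow 2)

lemma int_sc' (a b : ℝ) : ∫ t in a..b, (Real.sinh (t-1) ^ 2 + Real.cosh (t-1) ^ 2)
    = Real.sinh (b-1) * Real.cosh (b-1) - Real.sinh (a-1) * Real.cosh (a-1) := by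
  apply intervalIntegral.integral_eq_sub_of_hasDerivAt
    (f := fun t => Real.sinh (t-1) * Real.cosh (t-1))
  · intro t _
    have hid : HasDerivAt (fun s : ℝ => s - 1) 1 t := (hasDerivAt_id t).sub_const 1
    have hs : HasDerivAt (fun s => Real.sinh (s-1)) (Real.cosh (t-1)) t := by
      simpa [Function.comp_def] using (Real.hasDerivAt_sinh (t-1)).comp t hid
    have hc : HasDerivAt (fun s => Real.cosh (s-1)) (Real.sinh (t-1)) t := by
      simpa [Function.comp_def] using (Real.hasDerivAt_cosh (t-1)).comp t hid
    have := hs.mul hc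
    exact this.congr_deriv (by ring)
  · apply Continuous.intervalIntegrable
    exact ((Real.continuous_sinh.comp (continuous_id.sub continuous_const)).pow 2).add
      ((Real.continuous_cosh.comp (continuous_id.sub continuous_const)).pow 2)

set_option maxHeartbeats 1000000 in
theorem C1norm_le_c1_H2norm (u u' u'' : ℝ → ℝ)
    (hu : IsH1 u u') (hu' : IsH1 u' u'')
    (hN0 : u' 0 = 0) (hN1 : u' 1 = 0) :
    ∀ x ∈ Set.Icc (0:ℝ) 1,
      Real.sqrt (u x ^ 2 + u' x ^ 2) ≤ c1 * H2norm u u' u'' := by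
  intro x hx
  obtain ⟨hx0, hx1⟩ := hx
  have z0 : (0:ℝ) ∈ Set.Icc (0:ℝ) 1 := by norm_num
  have z1 : (1:ℝ) ∈ Set.Icc (0:ℝ) 1 := by norm_num
  have hxm : x ∈ Set.Icc (0:ℝ) 1 := ⟨hx0, hx1⟩
  have h01 : Set.uIcc (0:ℝ) 1 = Set.Icc 0 1 := Set.uIcc_of_le (by norm_num)
  -- notation
  set sx := Real.sinh x with hsxd
  set cx := Real.cosh x with hcxd
  set sy := Real.sinh (1-x) with hsyd
  set cy := Real.cosh (1-x) with hcyd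
  have hsx : 0 ≤ sx := Real.sinh_nonneg_iff.mpr hx0
  have hsy : 0 ≤ sy := Real.sinh_nonneg_iff.mpr (by linarith)
  have hcx : 0 < cx := Real.cosh_pos x
  have hcy : 0 < cy := Real.cosh_pos (1-x)
  have hs1 : 0 < Real.sinh 1 := Real.sinh_pos_iff.mpr one_pos
  have hadd_s : Real.sinh 1 = sx*cy + cx*sy := by
    rw [hsxd, hcxd, hsyd, hcyd, show (1:ℝ) = x + (1-x) by ring, Real.sinh_add]
    ring_nf
  have hadd_c : Real.cosh 1 = cx*cy + sx*sy := by
    rw [hsxd, hcxd, hsyd, hcyd, show (1:ℝ) = x + (1-x) by ring, Real.cosh_add]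
    ring_nf
  -- integrability of the squared integrands on [0,1]
  have huc2 : IntervalIntegrable (fun t => u t ^ 2) volume 0 1 := by
    apply ContinuousOn.intervalIntegrable
    rw [h01]; exact hu.1.pow 2
  have hu'2 : IntervalIntegrable (fun t => u' t ^ 2) volume 0 1 := hu.2.2.1
  have hu''2 : IntervalIntegrable (fun t => u'' t ^ 2) volume 0 1 := hu'.2.2.1
  have hq1 : IntervalIntegrable (fun t => u t ^ 2 + u' t ^ 2) volume 0 1 :=
    huc2.add hu'2
  have hq2 : IntervalIntegrable (fun t => u' t ^ 2 + u'' t ^ 2) volume 0 1 :=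
    hu'2.add hu''2
  have hsubl : Set.uIcc 0 x ⊆ Set.uIcc (0:ℝ) 1 :=
    Set.uIcc_subset_uIcc (h01 ▸ z0) (h01 ▸ hxm)
  have hsubr : Set.uIcc x 1 ⊆ Set.uIcc (0:ℝ) 1 :=
    Set.uIcc_subset_uIcc (h01 ▸ hxm) (h01 ▸ z1)
  -- the four energy integrals
  set Jl := ∫ t in (0:ℝ)..x, (u t ^ 2 + u' t ^ 2) with hJld
  set Jr := ∫ t in x..(1:ℝ), (u t ^ 2 + u' t ^ 2) with hJrd
  set Kl := ∫ t in (0:ℝ)..x, (u' t ^ 2 + u'' t ^ 2) with hKld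
  set Kr := ∫ t in x..(1:ℝ), (u' t ^ 2 + u'' t ^ 2) with hKrd
  have hJl : 0 ≤ Jl := intervalIntegral.integral_nonneg hx0 (fun t _ => by positivity)
  have hJr : 0 ≤ Jr := intervalIntegral.integral_nonneg hx1 (fun t _ => by positivity)
  have hKl : 0 ≤ Kl := intervalIntegral.integral_nonneg hx0 (fun t _ => by positivity)
  have hKr : 0 ≤ Kr := intervalIntegral.integral_nonneg hx1 (fun t _ => by positivity)
  set I0 := ∫ t in (0:ℝ)..1, u t ^ 2 with hI0d
  set I1 := ∫ t in (0:ℝ)..1, u' t ^ 2 with hI1d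
  set I2 := ∫ t in (0:ℝ)..1, u'' t ^ 2 with hI2d
  have hI0 : 0 ≤ I0 := intervalIntegral.integral_nonneg (by norm_num) (fun t _ => by positivity)
  have hI1 : 0 ≤ I1 := intervalIntegral.integral_nonneg (by norm_num) (fun t _ => by positivity)
  have hI2 : 0 ≤ I2 := intervalIntegral.integral_nonneg (by norm_num) (fun t _ => by positivity)
  have hJsplit : Jl + Jr = I0 + I1 := by
    rw [hJld, hJrd, intervalIntegral.integral_add_adjacent_intervals
      (hq1.mono_set hsubl) (hq1.mono_set hsubr),
      intervalIntegral.integral_add huc2 hu'2]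
  have hKsplit : Kl + Kr = I1 + I2 := by
    rw [hKld, hKrd, intervalIntegral.integral_add_adjacent_intervals
      (hq2.mono_set hsubl) (hq2.mono_set hsubr),
      intervalIntegral.integral_add hu'2 hu''2]
  -- derivative facts
  have hds' : ∀ t : ℝ, HasDerivAt (fun s => Real.sinh (s-1)) (Real.cosh (t-1)) t := by
    intro t
    simpa [Function.comp_def] using (Real.hasDerivAt_sinh (t-1)).comp t ((hasDerivAt_id t).sub_const 1)
  have hdc' : ∀ t : ℝ, HasDerivAt (fun s => Real.cosh (s-1)) (Real.sinh (t-1)) t := by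
    intro t
    simpa [Function.comp_def] using (Real.hasDerivAt_cosh (t-1)).comp t ((hasDerivAt_id t).sub_const 1)
  have hcontc' : Continuous (fun t : ℝ => Real.cosh (t-1)) :=
    Real.continuous_cosh.comp (continuous_id.sub continuous_const)
  have hconts' : Continuous (fun t : ℝ => Real.sinh (t-1)) :=
    Real.continuous_sinh.comp (continuous_id.sub continuous_const)
  -- the four instantiations
  have L1 := sq_bound u u' hu Real.sinh Real.cosh Real.hasDerivAt_sinh
    Real.continuous_cosh 0 x z0 hxm hx0
  have L2 := sq_bound u u' hu (fun t => Real.sinh (t-1)) (fun t => Real.cosh (t-1))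
    hds' hcontc' x 1 hxm z1 hx1
  have L3 := sq_bound u' u'' hu' Real.cosh Real.sinh Real.hasDerivAt_cosh
    Real.continuous_sinh 0 x z0 hxm hx0
  have L4 := sq_bound u' u'' hu' (fun t => Real.cosh (t-1)) (fun t => Real.sinh (t-1))
    hdc' hconts' x 1 hxm z1 hx1
  -- simplify L1
  rw [Real.sinh_zero, mul_zero, sub_zero, int_sc 0 x, Real.sinh_zero, zero_mul,
    sub_zero] at L1
  -- L1 : (u x * sx)^2 ≤ sx * cx * Jl
  beta_reduce at L2 L4
  -- simplify L2
  have hsxy : Real.sinh (x-1) = -sy := by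
    rw [hsyd, show x - 1 = -(1-x) by ring, Real.sinh_neg]
  have hcxy : Real.cosh (x-1) = cy := by
    rw [hcyd, show x - 1 = -(1-x) by ring, Real.cosh_neg]
  rw [int_sc' x 1, show (1:ℝ)-1 = 0 by norm_num, Real.sinh_zero, zero_mul, mul_zero,
    zero_sub, hsxy, hcxy] at L2
  -- simplify L3 : swap integrand order
  have hswapl : ∫ t in (0:ℝ)..x, (Real.cosh t ^ 2 + Real.sinh t ^ 2)
      = ∫ t in (0:ℝ)..x, (Real.sinh t ^ 2 + Real.cosh t ^ 2) := by
    apply intervalIntegral.integral_congr; intro t _; ring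
  have hswapr : ∫ t in x..(1:ℝ), (Real.cosh (t-1) ^ 2 + Real.sinh (t-1) ^ 2)
      = ∫ t in x..(1:ℝ), (Real.sinh (t-1) ^ 2 + Real.cosh (t-1) ^ 2) := by
    apply intervalIntegral.integral_congr; intro t _; ring
  rw [hswapl, int_sc 0 x, Real.sinh_zero, zero_mul, sub_zero, hN0, zero_mul,
    sub_zero] at L3
  rw [hswapr, int_sc' x 1, show (1:ℝ)-1 = 0 by norm_num, Real.sinh_zero, zero_mul,
    zero_sub, hN1, zero_mul, zero_sub, hsxy, hcxy] at L4
  rw [← hJld, ← hsxd, ← hcxd] at L1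
  rw [← hJrd] at L2
  rw [← hKld, ← hsxd, ← hcxd] at L3
  rw [← hKrd] at L4
  -- now reduce
  have R1 : u x ^ 2 * sx ≤ cx * Jl := by
    rcases hsx.eq_or_lt with h | h
    · rw [← h, mul_zero]; exact mul_nonneg hcx.le hJl
    · have hh : (u x ^ 2 * sx) * sx ≤ (cx * Jl) * sx := by
        calc (u x ^ 2 * sx) * sx = (u x * sx) ^ 2 := by ring
          _ ≤ sx * cx * Jl := L1
          _ = (cx * Jl) * sx := by ring
      exact le_of_mul_le_mul_right hh h
  have R2 : u x ^ 2 * sy ≤ cy * Jr := by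
    rcases hsy.eq_or_lt with h | h
    · rw [← h, mul_zero]; exact mul_nonneg hcy.le hJr
    · have hh : (u x ^ 2 * sy) * sy ≤ (cy * Jr) * sy := by
        calc (u x ^ 2 * sy) * sy = (-(u x * -sy)) ^ 2 := by ring
          _ ≤ (0 - -sy * cy) * Jr := L2
          _ = (cy * Jr) * sy := by ring
      exact le_of_mul_le_mul_right hh h
  have R3 : u' x ^ 2 * cx ≤ sx * Kl := by
    have hh : (u' x ^ 2 * cx) * cx ≤ (sx * Kl) * cx := by
      calc (u' x ^ 2 * cx) * cx = (u' x * cx) ^ 2 := by ring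
        _ ≤ sx * cx * Kl := L3
        _ = (sx * Kl) * cx := by ring
    exact le_of_mul_le_mul_right hh hcx
  have R4 : u' x ^ 2 * cy ≤ sy * Kr := by
    have hh : (u' x ^ 2 * cy) * cy ≤ (sy * Kr) * cy := by
      calc (u' x ^ 2 * cy) * cy = (-(u' x * cy)) ^ 2 := by ring
        _ ≤ -(-sy * cy) * Kr := L4
        _ = (sy * Kr) * cy := by ring
    exact le_of_mul_le_mul_right hh hcy
  -- main combined inequality
  have main : (u x ^ 2 + u' x ^ 2) * Real.sinh 1 ≤ Real.cosh 1 * (I0 + I1 + I2) := by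
    have a1 : (u x ^ 2 * sx) * cy ≤ (cx * Jl) * cy := mul_le_mul_of_nonneg_right R1 hcy.le
    have a2 : (u x ^ 2 * sy) * cx ≤ (cy * Jr) * cx := mul_le_mul_of_nonneg_right R2 hcx.le
    have a3 : (u' x ^ 2 * cx) * sy ≤ (sx * Kl) * sy := mul_le_mul_of_nonneg_right R3 hsy
    have a4 : (u' x ^ 2 * cy) * sx ≤ (sy * Kr) * sx := mul_le_mul_of_nonneg_right R4 hsx
    have m1 : u x ^ 2 * Real.sinh 1 ≤ cx * cy * (Jl + Jr) := by
      rw [hadd_s]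
      calc u x ^ 2 * (sx*cy + cx*sy) = (u x ^ 2 * sx) * cy + (u x ^ 2 * sy) * cx := by ring
        _ ≤ (cx * Jl) * cy + (cy * Jr) * cx := add_le_add a1 a2
        _ = cx * cy * (Jl + Jr) := by ring
    have m2 : u' x ^ 2 * Real.sinh 1 ≤ sx * sy * (Kl + Kr) := by
      rw [hadd_s]
      calc u' x ^ 2 * (sx*cy + cx*sy) = (u' x ^ 2 * cx) * sy + (u' x ^ 2 * cy) * sx := by
            ring
        _ ≤ (sx * Kl) * sy + (sy * Kr) * sx := add_le_add a3 a4
        _ = sx * sy * (Kl + Kr) := by ring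
    rw [hJsplit] at m1
    rw [hKsplit] at m2
    have b1 : 0 ≤ cx * cy * I2 := mul_nonneg (mul_nonneg hcx.le hcy.le) hI2
    have b2 : 0 ≤ sx * sy * I0 := mul_nonneg (mul_nonneg hsx hsy) hI0
    calc (u x ^ 2 + u' x ^ 2) * Real.sinh 1
        = u x ^ 2 * Real.sinh 1 + u' x ^ 2 * Real.sinh 1 := by ring
      _ ≤ cx * cy * (I0 + I1) + sx * sy * (I1 + I2) := add_le_add m1 m2
      _ ≤ cx * cy * (I0 + I1) + sx * sy * (I1 + I2) + (cx * cy * I2 + sx * sy * I0) := by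
          linarith
      _ = (cx * cy + sx * sy) * (I0 + I1 + I2) := by ring
      _ = Real.cosh 1 * (I0 + I1 + I2) := by rw [hadd_c]
  have htanh_pos : 0 < Real.tanh 1 := by
    rw [Real.tanh_eq_sinh_div_cosh]
    exact div_pos hs1 (Real.cosh_pos 1)
  have final_ineq : u x ^ 2 + u' x ^ 2 ≤ (Real.tanh 1)⁻¹ * (I0 + I1 + I2) := by
    rw [Real.tanh_eq_sinh_div_cosh, inv_div, div_mul_eq_mul_div, le_div_iff₀ hs1]
    calc (u x ^ 2 + u' x ^ 2) * Real.sinh 1 ≤ Real.cosh 1 * (I0 + I1 + I2) := main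
      _ = Real.cosh 1 * (I0 + I1 + I2) := rfl
  have hc1 : c1 = Real.sqrt ((Real.tanh 1)⁻¹) := by
    rw [c1, Real.rpow_neg htanh_pos.le, show ((1:ℝ)/2) = (1/2 : ℝ) from rfl,
      ← Real.sqrt_eq_rpow, ← Real.sqrt_inv]
  have hH2 : H2norm u u' u'' = Real.sqrt (I0 + I1 + I2) := rfl
  calc Real.sqrt (u x ^ 2 + u' x ^ 2)
      ≤ Real.sqrt ((Real.tanh 1)⁻¹ * (I0 + I1 + I2)) := Real.sqrt_le_sqrt final_ineq
    _ = Real.sqrt ((Real.tanh 1)⁻¹) * Real.sqrt (I0 + I1 + I2) :=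
        Real.sqrt_mul (inv_nonneg.mpr htanh_pos.le) _
    _ = c1 * H2norm u u' u'' := by rw [hc1, hH2]
end

section
/- Let m > 1 and (a_k)_{k∈ℕ} be a real sequence with lim a_k = r ≠ 0 and a_k ≠ 0 for k ≥ m+1. Let 𝒫 : ℓ²(ℕ) → ℓ²(ℕ) be bounded linear, define G : ℓ² → ℓ² by (G(v))_k = a_k v_k − (𝒫(v))_k, let 𝒫_m = pr_m ∘ 𝒫 ∘ π_{ℝᵐ} : ℝᵐ → ℝᵐ and G_m = pr_m ∘ G ∘ pr_m, where pr_m is projection onto the first m coordinates and π_{ℝᵐ} the inclusion ℝᵐ ↪ ℓ². Then G, 𝒫_m, G_m are bounded and |λ(𝒫) − min{λ(𝒫_m), inf_{k≥m+1}|a_k|}| ≤ ‖G − G_m‖. -/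
open Classical

/-- The bijectivity modulus. -/
noncomputable def bijMod {X Y : Type*} [NormedAddCommGroup X] [NormedSpace ℝ X]
    [NormedAddCommGroup Y] [NormedSpace ℝ Y] (F : X →L[ℝ] Y) : ℝ :=
  if Function.Bijective F then ‖ContinuousLinearMap.inverse F‖⁻¹ else 0

open scoped ENNReal

local notation "ℋ" => lp (fun _ : ℕ => ℝ) 2

section AuxBijMod

section RingLemma
variable {R : Type*} [NormedRing R]

private lemma units_inv_norm_le (u w : Rˣ) :
    ‖(↑u⁻¹ : R)‖⁻¹ ≤ ‖(↑w⁻¹ : R)‖⁻¹ + ‖(u : R) - w‖ := by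
  set d := ‖(u : R) - w‖ with hd
  have hd0 : 0 ≤ d := norm_nonneg _
  set A := ‖(↑u⁻¹ : R)‖ with hA
  set B := ‖(↑w⁻¹ : R)‖ with hB
  have hA0 : 0 ≤ A := norm_nonneg _
  have hB0 : 0 ≤ B := norm_nonneg _
  have hid : (↑w⁻¹ : R) = ↑u⁻¹ + ↑w⁻¹ * ((u : R) - w) * ↑u⁻¹ := by
    have : (↑w⁻¹ : R) * ((u : R) - w) * ↑u⁻¹ = ↑w⁻¹ - ↑u⁻¹ := by
      rw [mul_sub, sub_mul]
      simp [mul_assoc]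
    rw [this]; abel
  have key : B ≤ A + A * d * B := by
    calc B = ‖(↑u⁻¹ : R) + ↑w⁻¹ * ((u : R) - w) * ↑u⁻¹‖ := by rw [← hid]
    _ ≤ A + ‖(↑w⁻¹ : R) * ((u : R) - w) * ↑u⁻¹‖ := norm_add_le _ _
    _ ≤ A + B * d * A := by
        gcongr
        calc ‖(↑w⁻¹ : R) * ((u : R) - w) * ↑u⁻¹‖ ≤ ‖(↑w⁻¹ : R) * ((u : R) - w)‖ * A :=
          norm_mul_le _ _
        _ ≤ B * d * A := by gcongr; exact norm_mul_le _ _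
    _ = A + A * d * B := by ring
  rcases eq_or_lt_of_le hA0 with h | hApos
  · simp [← h]
    positivity
  rcases eq_or_lt_of_le hB0 with h | hBpos
  · exfalso
    have hw : (↑w⁻¹ : R) = 0 := by
      rw [← norm_eq_zero]; exact h.symm
    have h1 : (1 : R) = 0 := by
      have := w.mul_inv
      rw [hw, mul_zero] at this
      exact this.symm
    have hu0 : (↑u⁻¹ : R) = 0 := by
      calc (↑u⁻¹ : R) = ↑u⁻¹ * 1 := by rw [mul_one]
      _ = 0 := by rw [h1, mul_zero]
    rw [hu0, norm_zero] at hA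
    exact hApos.ne' hA
  have h1 : 1 ≤ A * (B⁻¹ + d) := by
    rw [← mul_le_mul_iff_of_pos_right hBpos]
    have : A * (B⁻¹ + d) * B = A + A * d * B := by
      field_simp
    rw [this, one_mul]
    exact key
  calc A⁻¹ = A⁻¹ * 1 := by rw [mul_one]
  _ ≤ A⁻¹ * (A * (B⁻¹ + d)) := by
      apply mul_le_mul_of_nonneg_left h1 (by positivity)
  _ = B⁻¹ + d := by field_simp
end RingLemma

section Lip
variable {X : Type*} [NormedAddCommGroup X] [NormedSpace ℝ X] [CompleteSpace X]

private lemma bijMod_nonneg {Y Z : Type*} [NormedAddCommGroup Y] [NormedSpace ℝ Y]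
    [NormedAddCommGroup Z] [NormedSpace ℝ Z] (F : Y →L[ℝ] Z) : 0 ≤ bijMod F := by
  unfold bijMod
  split
  · positivity
  · exact le_refl _

private lemma bijMod_eq_of_unit (F : X →L[ℝ] X) (u : (X →L[ℝ] X)ˣ)
    (hu : (u : X →L[ℝ] X) = F) :
    bijMod F = ‖(↑u⁻¹ : X →L[ℝ] X)‖⁻¹ := by
  have hbij : Function.Bijective F := by
    rw [← hu]
    exact ContinuousLinearMap.isUnit_iff_bijective.mp ⟨u, rfl⟩
  unfold bijMod
  rw [if_pos hbij]
  congr 1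
  rw [← ContinuousLinearMap.ringInverse_eq_inverse, ← hu, Ring.inverse_unit]

private lemma bijMod_le_add (F G : X →L[ℝ] X) : bijMod F ≤ bijMod G + ‖F - G‖ := by
  by_cases hF : Function.Bijective F
  · obtain ⟨u, hu⟩ := ContinuousLinearMap.isUnit_iff_bijective.mpr hF
    rw [bijMod_eq_of_unit F u hu]
    by_cases hG : Function.Bijective G
    · obtain ⟨w, hw⟩ := ContinuousLinearMap.isUnit_iff_bijective.mpr hG
      rw [bijMod_eq_of_unit G w hw]
      calc ‖(↑u⁻¹ : X →L[ℝ] X)‖⁻¹ ≤ ‖(↑w⁻¹ : X →L[ℝ] X)‖⁻¹ + ‖(u : X →L[ℝ] X) - w‖ :=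
        units_inv_norm_le u w
      _ = _ := by rw [hu, hw]
    · have h0 : bijMod G = 0 := by unfold bijMod; rw [if_neg hG]
      rw [h0, zero_add]
      by_contra hlt
      push_neg at hlt
      have hnorm : ‖G - F‖ < ‖(↑u⁻¹ : X →L[ℝ] X)‖⁻¹ := by
        rw [norm_sub_rev]; exact hlt
      have : IsUnit G := by
        refine ⟨u.add (G - F) hnorm, ?_⟩
        rw [Units.val_add, hu]
        abel
      exact hG (ContinuousLinearMap.isUnit_iff_bijective.mp this)
  · have h0 : bijMod F = 0 := by unfold bijMod; rw [if_neg hF]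
    rw [h0]
    have := bijMod_nonneg G
    positivity

private lemma abs_bijMod_sub_le (F G : X →L[ℝ] X) : |bijMod F - bijMod G| ≤ ‖F - G‖ := by
  rw [abs_sub_le_iff]
  constructor
  · linarith [bijMod_le_add F G]
  · have := bijMod_le_add G F
    rw [norm_sub_rev] at this
    linarith
end Lip

private lemma hp2 : 0 < (2 : ℝ≥0∞).toReal := by norm_num

private lemma rpow_toReal (x : ℝ) : x ^ (2 : ℝ≥0∞).toReal = x ^ 2 := by
  have : (2 : ℝ≥0∞).toReal = (2 : ℝ) := by norm_num
  rw [this]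
  exact Real.rpow_two x

private lemma summable_sq (f : ℋ) : Summable (fun k => ((f : ∀ _ : ℕ, ℝ) k) ^ 2) := by
  have := (lp.memℓp f).summable hp2
  simp only [rpow_toReal, Real.norm_eq_abs, sq_abs] at this
  exact this

private lemma norm_sq_eq (f : ℋ) : ‖f‖ ^ 2 = ∑' k, ((f : ∀ _ : ℕ, ℝ) k) ^ 2 := by
  have := lp.norm_rpow_eq_tsum hp2 f
  simp only [rpow_toReal, Real.norm_eq_abs, sq_abs] at this
  exact this

private lemma norm_le_of_sq (f : ℋ) (C : ℝ) (hC : 0 ≤ C)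
    (h : ∑' k, ((f : ∀ _ : ℕ, ℝ) k) ^ 2 ≤ C ^ 2) : ‖f‖ ≤ C := by
  apply lp.norm_le_of_tsum_le hp2 hC
  simpa only [rpow_toReal, Real.norm_eq_abs, sq_abs] using h

private lemma sq_le_imp {a b : ℝ} (ha : 0 ≤ a) (hb : 0 ≤ b) (h : a ^ 2 ≤ b ^ 2) : a ≤ b := by
  calc a = Real.sqrt (a ^ 2) := (Real.sqrt_sq ha).symm
  _ ≤ Real.sqrt (b ^ 2) := Real.sqrt_le_sqrt h
  _ = b := Real.sqrt_sq hb

private lemma sq_eq_imp {a b : ℝ} (ha : 0 ≤ a) (hb : 0 ≤ b) (h : a ^ 2 = b ^ 2) : a = b := by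
  calc a = Real.sqrt (a ^ 2) := (Real.sqrt_sq ha).symm
  _ = Real.sqrt (b ^ 2) := by rw [h]
  _ = b := Real.sqrt_sq hb

private lemma sum_sq_le (n : ℕ) (v : ℋ) :
    ∑ k ∈ Finset.range n, ((v : ∀ _ : ℕ, ℝ) k) ^ 2 ≤ ‖v‖ ^ 2 := by
  have := lp.sum_rpow_le_norm_rpow hp2 v (Finset.range n)
  simp only [rpow_toReal, Real.norm_eq_abs, sq_abs] at this
  exact this

private lemma sq_term_le {b C : ℝ} (h : |b| ≤ C) (x : ℝ) : (b * x) ^ 2 ≤ C ^ 2 * x ^ 2 := by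
  rw [mul_pow]
  apply mul_le_mul_of_nonneg_right _ (sq_nonneg x)
  calc b ^ 2 = |b| ^ 2 := (sq_abs b).symm
  _ ≤ C ^ 2 := pow_le_pow_left₀ (abs_nonneg b) h 2

private lemma memlp_mul (b : ℕ → ℝ) (C : ℝ) (hb : ∀ k, |b k| ≤ C) (v : ℋ) :
    Memℓp (fun k => b k * (v : ∀ _ : ℕ, ℝ) k) 2 := by
  apply memℓp_gen
  simp only [rpow_toReal, Real.norm_eq_abs, sq_abs]
  apply Summable.of_nonneg_of_le (fun k => sq_nonneg _) (fun k => ?_)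
    ((summable_sq v).mul_left (C ^ 2))
  exact sq_term_le (hb k) _

private noncomputable def mulOp (b : ℕ → ℝ) (C : ℝ) (hb : ∀ k, |b k| ≤ C) : ℋ →L[ℝ] ℋ := by
  have hC : 0 ≤ C := le_trans (abs_nonneg _) (hb 0)
  refine LinearMap.mkContinuous
    { toFun := fun v => (⟨fun k => b k * (v : ∀ _ : ℕ, ℝ) k, memlp_mul b C hb v⟩ : ℋ)
      map_add' := fun v w => ?_
      map_smul' := fun c v => ?_ } C (fun v => ?_)
  · apply lp.ext
    funext k
    simp [lp.coeFn_add, mul_add, Pi.add_apply]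
    rfl
  · apply lp.ext
    funext k
    simp [lp.coeFn_smul]
    ring
  · apply norm_le_of_sq _ _ (by positivity)
    calc ∑' k, (b k * (v : ∀ _ : ℕ, ℝ) k) ^ 2
        ≤ ∑' k, C ^ 2 * ((v : ∀ _ : ℕ, ℝ) k) ^ 2 := by
          apply Summable.tsum_le_tsum _ _ ((summable_sq v).mul_left _)
          · exact fun k => sq_term_le (hb k) _
          · exact Summable.of_nonneg_of_le (fun k => sq_nonneg _)
              (fun k => sq_term_le (hb k) _) ((summable_sq v).mul_left (C ^ 2))
    _ = C ^ 2 * ∑' k, ((v : ∀ _ : ℕ, ℝ) k) ^ 2 := tsum_mul_left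
    _ = (C * ‖v‖) ^ 2 := by rw [← norm_sq_eq]; ring

private lemma mulOp_apply (b : ℕ → ℝ) (C : ℝ) (hb : ∀ k, |b k| ≤ C) (v : ℋ) (k : ℕ) :
    (mulOp b C hb v : ∀ _ : ℕ, ℝ) k = b k * (v : ∀ _ : ℕ, ℝ) k := rfl

private lemma norm_mulOp_apply_le (b : ℕ → ℝ) (C : ℝ) (hb : ∀ k, |b k| ≤ C) (v : ℋ) :
    ‖mulOp b C hb v‖ ≤ C * ‖v‖ := by
  have hC : 0 ≤ C := le_trans (abs_nonneg _) (hb 0)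
  apply norm_le_of_sq _ _ (by positivity)
  calc ∑' k, ((mulOp b C hb v : ∀ _ : ℕ, ℝ) k) ^ 2
      ≤ ∑' k, C ^ 2 * ((v : ∀ _ : ℕ, ℝ) k) ^ 2 := by
        apply Summable.tsum_le_tsum _ _ ((summable_sq v).mul_left _)
        · intro k
          rw [mulOp_apply]
          exact sq_term_le (hb k) _
        · exact summable_sq _
  _ = C ^ 2 * ∑' k, ((v : ∀ _ : ℕ, ℝ) k) ^ 2 := tsum_mul_left
  _ = (C * ‖v‖) ^ 2 := by rw [← norm_sq_eq]; ring

variable (m : ℕ)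

private lemma memlp_incl (x : EuclideanSpace ℝ (Fin m)) :
    Memℓp (fun k => if h : k < m then x ⟨k, h⟩ else 0) 2 := by
  apply memℓp_gen
  apply summable_of_ne_finset_zero (s := Finset.range m)
  intro k hk
  rw [Finset.mem_range] at hk
  rw [dif_neg hk]
  simp [Real.zero_rpow hp2.ne']

private lemma euclid_norm_sq (x : EuclideanSpace ℝ (Fin m)) :
    ‖x‖ ^ 2 = ∑ j : Fin m, x j ^ 2 := by
  rw [← real_inner_self_eq_norm_sq, PiLp.inner_apply]
  simp [RCLike.inner_apply, sq]

private lemma incl_norm_sq (x : EuclideanSpace ℝ (Fin m)) :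
    (∑' k, (((⟨fun k => if h : k < m then x ⟨k, h⟩ else 0, memlp_incl m x⟩ : ℋ) :
      ∀ _ : ℕ, ℝ) k) ^ 2) = ‖x‖ ^ 2 := by
  rw [tsum_eq_sum (s := Finset.range m) (by
    intro k hk
    rw [Finset.mem_range] at hk
    simp only []
    rw [dif_neg hk]
    norm_num)]
  rw [euclid_norm_sq]
  rw [Finset.sum_range fun k => _]
  apply Finset.sum_congr rfl
  intro j _
  simp

private noncomputable def incl : EuclideanSpace ℝ (Fin m) →L[ℝ] ℋ := by
  refine LinearMap.mkContinuous
    { toFun := fun x => (⟨fun k => if h : k < m then x ⟨k, h⟩ else 0, memlp_incl m x⟩ : ℋ)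
      map_add' := fun x y => ?_
      map_smul' := fun c x => ?_ } 1 (fun x => ?_)
  · apply lp.ext
    funext k
    erw [lp.coeFn_add, Pi.add_apply]
    by_cases h : k < m <;> simp [h]
  · apply lp.ext
    funext k
    by_cases h : k < m <;> simp [lp.coeFn_smul, h]
  · apply norm_le_of_sq _ _ (by positivity)
    exact le_of_eq (by rw [one_mul]; exact incl_norm_sq m x)

private lemma incl_apply (x : EuclideanSpace ℝ (Fin m)) (k : ℕ) :
    (incl m x : ∀ _ : ℕ, ℝ) k = if h : k < m then x ⟨k, h⟩ else 0 := rfl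

private lemma norm_incl (x : EuclideanSpace ℝ (Fin m)) : ‖incl m x‖ = ‖x‖ := by
  apply sq_eq_imp (norm_nonneg _) (norm_nonneg _)
  rw [norm_sq_eq]
  exact incl_norm_sq m x

private noncomputable def projE : ℋ →L[ℝ] EuclideanSpace ℝ (Fin m) := by
  refine LinearMap.mkContinuous
    { toFun := fun v => (WithLp.toLp 2 (fun j : Fin m => (v : ∀ _ : ℕ, ℝ) j) : EuclideanSpace ℝ (Fin m))
      map_add' := fun v w => ?_
      map_smul' := fun c v => ?_ } 1 (fun v => ?_)
  · ext j
    simp [lp.coeFn_add]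
  · ext j
    simp [lp.coeFn_smul]
  · apply sq_le_imp (norm_nonneg _) (by positivity)
    rw [euclid_norm_sq]
    rw [one_mul]
    calc ∑ j : Fin m, ((v : ∀ _ : ℕ, ℝ) j) ^ 2
        = ∑ k ∈ Finset.range m, ((v : ∀ _ : ℕ, ℝ) k) ^ 2 := by
          rw [Finset.sum_range fun k => _]
    _ ≤ ‖v‖ ^ 2 := sum_sq_le m v

private lemma projE_apply (v : ℋ) (j : Fin m) : projE m v j = (v : ∀ _ : ℕ, ℝ) j := rfl

private lemma inner_zero_of (f g : ℋ)
    (h : ∀ k, (f : ∀ _ : ℕ, ℝ) k * (g : ∀ _ : ℕ, ℝ) k = 0) :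
    (inner ℝ f g) = 0 := by
  rw [lp.inner_eq_tsum]
  convert tsum_zero with k
  simpa [RCLike.inner_apply, mul_comm] using h k

private lemma pyth (f g : ℋ) (h : (inner ℝ f g) = 0) :
    ‖f + g‖ ^ 2 = ‖f‖ ^ 2 + ‖g‖ ^ 2 := by
  rw [norm_add_sq_real, h]; ring

private lemma inv_flip_le {x y : ℝ} (hx : 0 < x) (h : x⁻¹ ≤ y) : y⁻¹ ≤ x := by
  have hy : 0 < y := lt_of_lt_of_le (inv_pos.mpr hx) h
  rw [← inv_inv x]
  gcongr

private lemma inverse_of_inverses {E : Type*} [NormedAddCommGroup E] [NormedSpace ℝ E]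
    (f g : E →L[ℝ] E) (h1 : Function.LeftInverse g f)
    (h2 : Function.RightInverse g f) : ContinuousLinearMap.inverse f = g := by
  have hc : ((ContinuousLinearEquiv.equivOfInverse f g h1 h2) : E →L[ℝ] E) = f := by
    ext x
    exact ContinuousLinearEquiv.equivOfInverse_apply f g h1 h2 x
  rw [← hc, ContinuousLinearMap.inverse_equiv]
  ext x
  rw [ContinuousLinearEquiv.symm_equivOfInverse]
  exact ContinuousLinearEquiv.equivOfInverse_apply g f h2 h1 x

private lemma inv_max_eq_min {x y : ℝ} (hx : 0 < x) (hy : 0 < y) :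
    (max x y)⁻¹ = min x⁻¹ y⁻¹ := by
  rcases le_total x y with h | h
  · rw [max_eq_right h, min_eq_right (by gcongr)]
  · rw [max_eq_left h, min_eq_left (by gcongr)]

end AuxBijMod

set_option maxHeartbeats 2000000 in
/-- Let `(a k)` converge to `r ≠ 0` with `a k ≠ 0` for `k ≥ m`, and let
`𝒫 : ℓ²(ℕ) → ℓ²(ℕ)` be bounded linear. Then the operators `G` (given by
`(G v) k = a k * v k − (𝒫 v) k`), `𝒫_m = pr_m ∘ 𝒫 ∘ π_{ℝᵐ}` and
`G_m = pr_m ∘ G ∘ pr_m` are bounded (i.e. exist as continuous linear maps,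
characterized by the listed formulas, where `w` is the truncation of the argument
to its first `m` coordinates), and
`|λ(𝒫) − min {λ(𝒫_m), inf_{k ≥ m} |a k|}| ≤ ‖G − G_m‖`. -/
theorem bijMod_finite_dim_approx (m : ℕ) (hm : 1 < m) (a : ℕ → ℝ) (r : ℝ)
    (hr : r ≠ 0) (ha : Filter.Tendsto a Filter.atTop (nhds r))
    (hak : ∀ k, m ≤ k → a k ≠ 0)
    (P : lp (fun _ : ℕ => ℝ) 2 →L[ℝ] lp (fun _ : ℕ => ℝ) 2) :
    ∃ (G Gm : lp (fun _ : ℕ => ℝ) 2 →L[ℝ] lp (fun _ : ℕ => ℝ) 2)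
      (Pm : EuclideanSpace ℝ (Fin m) →L[ℝ] EuclideanSpace ℝ (Fin m)),
      (∀ (v : lp (fun _ : ℕ => ℝ) 2) (k : ℕ),
        (G v : ∀ _ : ℕ, ℝ) k = a k * (v : ∀ _ : ℕ, ℝ) k - (P v : ∀ _ : ℕ, ℝ) k) ∧
      (∀ (x : EuclideanSpace ℝ (Fin m)) (w : lp (fun _ : ℕ => ℝ) 2),
        (∀ j : Fin m, (w : ∀ _ : ℕ, ℝ) j = x j) →
        (∀ k, m ≤ k → (w : ∀ _ : ℕ, ℝ) k = 0) →
        ∀ j : Fin m, Pm x j = (P w : ∀ _ : ℕ, ℝ) j) ∧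
      (∀ (v w : lp (fun _ : ℕ => ℝ) 2),
        (∀ k, k < m → (w : ∀ _ : ℕ, ℝ) k = (v : ∀ _ : ℕ, ℝ) k) →
        (∀ k, m ≤ k → (w : ∀ _ : ℕ, ℝ) k = 0) →
        ∀ k, (Gm v : ∀ _ : ℕ, ℝ) k =
          if k < m then (G w : ∀ _ : ℕ, ℝ) k else 0) ∧
      |bijMod P - min (bijMod Pm) (⨅ k : ℕ, |a (m + k)|)| ≤ ‖G - Gm‖ := by
  classical
  -- boundedness of `a`
  obtain ⟨N₁, hN₁⟩ : ∃ N, ∀ n, N ≤ n → |a n - r| < 1 := by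
    obtain ⟨N, hN⟩ := (Metric.tendsto_atTop.mp ha) 1 one_pos
    exact ⟨N, fun n hn => by simpa [Real.dist_eq] using hN n hn⟩
  set Ca : ℝ := |r| + 1 + ∑ j ∈ Finset.range N₁, |a j| with hCa_def
  have hsum_nonneg : (0:ℝ) ≤ ∑ j ∈ Finset.range N₁, |a j| :=
    Finset.sum_nonneg fun j _ => abs_nonneg _
  have hCa : ∀ k, |a k| ≤ Ca := by
    intro k
    rcases lt_or_ge k N₁ with h | h
    · have h1 : |a k| ≤ ∑ j ∈ Finset.range N₁, |a j| :=
        Finset.single_le_sum (f := fun j => |a j|) (fun j _ => abs_nonneg _)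
          (Finset.mem_range.mpr h)
      have h2 : (0:ℝ) ≤ |r| + 1 := by positivity
      simp only [hCa_def]
      linarith
    · have h1 := hN₁ k h
      have h2 : |a k| - |r| ≤ |a k - r| := abs_sub_abs_le_abs_sub (a k) r
      simp only [hCa_def]
      linarith
  have hCa0 : 0 ≤ Ca := le_trans (abs_nonneg _) (hCa 0)
  -- a positive lower bound for the tail of `|a|`
  have hrpos : 0 < |r| := abs_pos.mpr hr
  obtain ⟨N₂, hN₂⟩ : ∃ N, ∀ n, N ≤ n → |a n - r| < |r| / 2 := by
    obtain ⟨N, hN⟩ := (Metric.tendsto_atTop.mp ha) (|r| / 2) (by positivity)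
    exact ⟨N, fun n hn => by simpa [Real.dist_eq] using hN n hn⟩
  have hpos : ∀ k, 0 < |a (m + k)| := fun k =>
    abs_pos.mpr (hak _ (Nat.le_add_right m k))
  set c : ℝ := min (|r| / 2)
    ((Finset.range (N₂ + 1)).inf' ⟨0, by simp⟩ fun k => |a (m + k)|) with hc_def
  have hc0 : 0 < c := by
    apply lt_min (by positivity)
    exact (Finset.lt_inf'_iff _).2 fun k _ => hpos k
  have hcle : ∀ k, c ≤ |a (m + k)| := by
    intro k
    rcases le_or_gt k N₂ with h | h
    · exact le_trans (min_le_right _ _)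
        (Finset.inf'_le _ (Finset.mem_range.mpr (by omega)))
    · refine le_trans (min_le_left _ _) ?_
      have h1 := hN₂ (m + k) (by omega)
      have h2 : |r| - |a (m + k)| ≤ |r - a (m + k)| := abs_sub_abs_le_abs_sub r (a (m + k))
      rw [abs_sub_comm] at h2
      linarith
  set d : ℝ := ⨅ k : ℕ, |a (m + k)| with hd_def
  have hbdd : BddBelow (Set.range fun k : ℕ => |a (m + k)|) :=
    ⟨0, by rintro x ⟨k, rfl⟩; exact abs_nonneg _⟩
  have hd_le : ∀ k, d ≤ |a (m + k)| := fun k => ciInf_le hbdd k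
  have hd_le' : ∀ k, m ≤ k → d ≤ |a k| := by
    intro k hk
    have h : k = m + (k - m) := by omega
    rw [h]; exact hd_le _
  have hd0 : 0 < d := lt_of_lt_of_le hc0 (le_ciInf hcle)
  -- the operators
  set ind : ℕ → ℝ := fun k => if k < m then 1 else 0 with hind_def
  have hind : ∀ k, |ind k| ≤ 1 := by
    intro k; by_cases h : k < m <;> simp [hind_def, h]
  set pr := mulOp ind 1 hind with hpr_def
  set A := mulOp a Ca hCa with hA_def
  set G := A - P with hG_def
  set Gm := pr.comp (G.comp pr) with hGm_def
  set Pm := (projE m).comp (P.comp (incl m)) with hPm_def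
  set a' : ℕ → ℝ := fun k => if k < m then 0 else a k with ha'_def
  have ha' : ∀ k, |a' k| ≤ Ca := by
    intro k; by_cases h : k < m <;> simp [ha'_def, h, hCa k, hCa0]
  set A' := mulOp a' Ca ha' with hA'_def
  set Q := ((incl m).comp (Pm.comp (projE m))) + A' with hQ_def
  -- coordinate formulas
  have hprco : ∀ (v : ℋ) k, (pr v : ∀ _ : ℕ, ℝ) k =
      if k < m then (v : ∀ _ : ℕ, ℝ) k else 0 := by
    intro v k
    rw [hpr_def, mulOp_apply]
    by_cases h : k < m <;> simp [hind_def, h]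
  have hGco : ∀ (v : ℋ) k, (G v : ∀ _ : ℕ, ℝ) k =
      a k * (v : ∀ _ : ℕ, ℝ) k - (P v : ∀ _ : ℕ, ℝ) k := by
    intro v k
    rw [hG_def]
    rw [ContinuousLinearMap.sub_apply, lp.coeFn_sub, Pi.sub_apply, hA_def, mulOp_apply]
  have hip : ∀ v : ℋ, incl m (projE m v) = pr v := by
    intro v
    apply lp.ext
    funext k
    rw [incl_apply, hprco]
    by_cases h : k < m
    · rw [dif_pos h, if_pos h, projE_apply]
    · rw [dif_neg h, if_neg h]
  have hPmco : ∀ (x : EuclideanSpace ℝ (Fin m)) (j : Fin m),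
      Pm x j = (P (incl m x) : ∀ _ : ℕ, ℝ) j := by
    intro x j
    rw [hPm_def]
    rfl
  refine ⟨G, Gm, Pm, fun v k => hGco v k, ?_, ?_, ?_⟩
  · -- Pm characterization
    intro x w h1 h2 j
    have hw : w = incl m x := by
      apply lp.ext
      funext k
      rw [incl_apply]
      by_cases h : k < m
      · rw [dif_pos h]
        exact h1 ⟨k, h⟩
      · rw [dif_neg h]
        exact h2 k (by omega)
    rw [hPmco, hw]
  · -- Gm characterization
    intro v w h1 h2 k
    have hw : w = pr v := by
      apply lp.ext
      funext n
      rw [hprco]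
      by_cases h : n < m
      · rw [if_pos h]; exact h1 n h
      · rw [if_neg h]; exact h2 n (by omega)
    have : (Gm v : ∀ _ : ℕ, ℝ) k = (pr (G (pr v)) : ∀ _ : ℕ, ℝ) k := by
      rw [hGm_def]; rfl
    rw [this, hprco, hw]
  -- the main inequality
  have hQco : ∀ (v : ℋ) k, (Q v : ∀ _ : ℕ, ℝ) k =
      (if h : k < m then (P (pr v) : ∀ _ : ℕ, ℝ) k else 0) + a' k * (v : ∀ _ : ℕ, ℝ) k := by
    intro v k
    have h1 : (Q v : ∀ _ : ℕ, ℝ) k =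
        (incl m (Pm (projE m v)) : ∀ _ : ℕ, ℝ) k + (A' v : ∀ _ : ℕ, ℝ) k := by
      rw [hQ_def, ContinuousLinearMap.add_apply, lp.coeFn_add, Pi.add_apply]
      rfl
    rw [h1, incl_apply, hA'_def, mulOp_apply]
    congr 1
    by_cases h : k < m
    · rw [dif_pos h, dif_pos h, hPmco, hip]
    · rw [dif_neg h, dif_neg h]
  have hQP : G - Gm = Q - P := by
    apply ContinuousLinearMap.ext
    intro v
    apply lp.ext
    funext k
    have hL : ((G - Gm) v : ∀ _ : ℕ, ℝ) k =
        (G v : ∀ _ : ℕ, ℝ) k - (Gm v : ∀ _ : ℕ, ℝ) k := by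
      rw [ContinuousLinearMap.sub_apply, lp.coeFn_sub, Pi.sub_apply]
    have hR : ((Q - P) v : ∀ _ : ℕ, ℝ) k =
        (Q v : ∀ _ : ℕ, ℝ) k - (P v : ∀ _ : ℕ, ℝ) k := by
      rw [ContinuousLinearMap.sub_apply, lp.coeFn_sub, Pi.sub_apply]
    have hGmv : (Gm v : ∀ _ : ℕ, ℝ) k = if k < m then (G (pr v) : ∀ _ : ℕ, ℝ) k else 0 := by
      have h0 : (Gm v : ∀ _ : ℕ, ℝ) k = (pr (G (pr v)) : ∀ _ : ℕ, ℝ) k := by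
        rw [hGm_def]; rfl
      rw [h0, hprco]
    rw [hL, hR, hGmv, hQco, hGco]
    by_cases h : k < m
    · rw [if_pos h, dif_pos h, hGco, hprco, if_pos h]
      have ha0 : a' k = 0 := by rw [ha'_def]; exact if_pos h
      rw [ha0]
      ring
    · rw [if_neg h, dif_neg h]
      have ha1 : a' k = a k := by rw [ha'_def]; exact if_neg h
      rw [ha1]
      ring
  have hπι : ∀ x : EuclideanSpace ℝ (Fin m), projE m (incl m x) = x := by
      intro x
      ext j
      rw [projE_apply, incl_apply, dif_pos j.isLt]
  have hprι : ∀ x : EuclideanSpace ℝ (Fin m), pr (incl m x) = incl m x := by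
      intro x
      rw [← hip (incl m x), hπι]
  have hιinj : Function.Injective (incl m) := by
      intro x y hxy
      have h1 : incl m (x - y) = 0 := by rw [map_sub, hxy, sub_self]
      have h2 : ‖x - y‖ = 0 := by rw [← norm_incl m (x - y), h1, norm_zero]
      exact sub_eq_zero.mp (norm_eq_zero.mp h2)
  have hQι : ∀ x, Q (incl m x) = incl m (Pm x) := by
      intro x
      apply lp.ext
      funext k
      have e1 : (incl m (Pm x) : ∀ _ : ℕ, ℝ) k = if h : k < m then Pm x ⟨k, h⟩ else 0 :=
        incl_apply m _ k
      have e2 : (incl m x : ∀ _ : ℕ, ℝ) k = if h : k < m then x ⟨k, h⟩ else 0 :=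
        incl_apply m _ k
      by_cases h : k < m
      · simp only [hQco, hprι, e1, e2, dif_pos h]
        have h0 : a' k = 0 := if_pos h
        rw [h0, zero_mul, add_zero, hPmco]
      · simp only [hQco, hprι, e1, e2, dif_neg h]
        rw [mul_zero, add_zero]
  have hQbij_eq : bijMod Q = min (bijMod Pm) d := by
    by_cases hPmBij : Function.Bijective Pm
    · -- Pm bijective
      have hker : LinearMap.ker (Pm : EuclideanSpace ℝ (Fin m) →ₗ[ℝ] EuclideanSpace ℝ (Fin m)) = ⊥ :=
        LinearMap.ker_eq_bot.mpr hPmBij.injective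
      have hrange : LinearMap.range (Pm : EuclideanSpace ℝ (Fin m) →ₗ[ℝ] EuclideanSpace ℝ (Fin m)) = ⊤ :=
        LinearMap.range_eq_top.mpr hPmBij.surjective
      set iPm : EuclideanSpace ℝ (Fin m) →L[ℝ] EuclideanSpace ℝ (Fin m) :=
        ((ContinuousLinearEquiv.ofBijective Pm hker hrange).symm :
          EuclideanSpace ℝ (Fin m) →L[ℝ] EuclideanSpace ℝ (Fin m)) with hiPm_def
      have hiPm1 : ∀ x, iPm (Pm x) = x := fun x =>
        ContinuousLinearEquiv.ofBijective_symm_apply_apply Pm hker hrange x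
      have hiPm2 : ∀ x, Pm (iPm x) = x := fun x =>
        ContinuousLinearEquiv.ofBijective_apply_symm_apply Pm hker hrange x
      have hinvPm : ContinuousLinearMap.inverse Pm = iPm :=
        inverse_of_inverses Pm iPm hiPm1 hiPm2
      set c' : ℕ → ℝ := fun k => if k < m then 0 else (a k)⁻¹ with hc'_def
      have hc' : ∀ k, |c' k| ≤ d⁻¹ := by
        intro k
        by_cases h : k < m
        · simp only [hc'_def, if_pos h, abs_zero]
          positivity
        · simp only [hc'_def, if_neg h, abs_inv]
          have h1 := hd_le' k (by omega)
          gcongr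
      set R := ((incl m).comp (iPm.comp (projE m))) + mulOp c' d⁻¹ hc' with hR_def
      have hRco : ∀ (v : ℋ) k, (R v : ∀ _ : ℕ, ℝ) k =
          (if h : k < m then (iPm (projE m v)) ⟨k, h⟩ else 0)
            + c' k * (v : ∀ _ : ℕ, ℝ) k := by
        intro v k
        have h1 : (R v : ∀ _ : ℕ, ℝ) k =
            (incl m (iPm (projE m v)) : ∀ _ : ℕ, ℝ) k
              + (mulOp c' d⁻¹ hc' v : ∀ _ : ℕ, ℝ) k := by
          rw [hR_def, ContinuousLinearMap.add_apply, lp.coeFn_add, Pi.add_apply]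
          rfl
        rw [h1, incl_apply, mulOp_apply]
      have hπQ : ∀ v : ℋ, projE m (Q v) = Pm (projE m v) := by
        intro v
        ext j
        rw [projE_apply, hQco, dif_pos j.isLt]
        have h0 : a' (j : ℕ) = 0 := if_pos j.isLt
        rw [h0, zero_mul, add_zero, hPmco, hip]
      have hπR : ∀ v : ℋ, projE m (R v) = iPm (projE m v) := by
        intro v
        ext j
        rw [projE_apply, hRco, dif_pos j.isLt]
        have h0 : c' (j : ℕ) = 0 := if_pos j.isLt
        rw [h0, zero_mul, add_zero]
      have hRQ : Function.LeftInverse R Q := by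
        intro v
        apply lp.ext
        funext k
        rw [hRco, hπQ, hiPm1]
        by_cases h : k < m
        · rw [dif_pos h, projE_apply]
          have h0 : c' k = 0 := if_pos h
          rw [h0, zero_mul, add_zero]
        · rw [dif_neg h, hQco, dif_neg h, zero_add, zero_add]
          have h0 : c' k = (a k)⁻¹ := if_neg h
          have h1 : a' k = a k := if_neg h
          rw [h0, h1, ← mul_assoc, inv_mul_cancel₀ (hak k (by omega)), one_mul]
      have hQR : Function.RightInverse R Q := by
        intro v
        apply lp.ext
        funext k
        have h1 : (Q (R v) : ∀ _ : ℕ, ℝ) k =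
            (incl m (Pm (projE m (R v))) : ∀ _ : ℕ, ℝ) k
              + (A' (R v) : ∀ _ : ℕ, ℝ) k := by
          rw [hQ_def, ContinuousLinearMap.add_apply, lp.coeFn_add, Pi.add_apply]
          rfl
        rw [h1, hπR, hiPm2, incl_apply, hA'_def, mulOp_apply]
        by_cases h : k < m
        · rw [dif_pos h, projE_apply]
          have h0 : a' k = 0 := if_pos h
          rw [h0, zero_mul, add_zero]
        · rw [dif_neg h, hRco, dif_neg h, zero_add, zero_add]
          have h0 : c' k = (a k)⁻¹ := if_neg h
          have h2 : a' k = a k := if_neg h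
          rw [h0, h2, ← mul_assoc, mul_inv_cancel₀ (hak k (by omega)), one_mul]
      have hQbij : Function.Bijective Q := ⟨hRQ.injective, hQR.surjective⟩
      have hinvQ : ContinuousLinearMap.inverse Q = R := inverse_of_inverses Q R hRQ hQR
      have hbQ : bijMod Q = ‖R‖⁻¹ := by unfold bijMod; rw [if_pos hQbij, hinvQ]
      have hbPm : bijMod Pm = ‖iPm‖⁻¹ := by unfold bijMod; rw [if_pos hPmBij, hinvPm]
      set nP := ‖iPm‖ with hnP_def
      have hnPpos : 0 < nP := by
        have hne : iPm ≠ 0 := by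
          intro h0
          obtain ⟨x, hx⟩ : ∃ x : EuclideanSpace ℝ (Fin m), x ≠ 0 := by
            haveI : Nonempty (Fin m) := ⟨⟨0, by omega⟩⟩
            exact exists_ne 0
          apply hx
          rw [← hiPm1 x, h0]
          simp
        exact norm_pos_iff.mpr hne
      set M := max nP d⁻¹ with hM_def
      have hM0 : 0 ≤ M := le_trans hnPpos.le (le_max_left _ _)
      have hRle : ‖R‖ ≤ M := by
        apply ContinuousLinearMap.opNorm_le_bound _ hM0
        intro v
        set y := incl m (iPm (projE m v)) with hy_def
        set z := mulOp c' d⁻¹ hc' v with hz_def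
        have hRv : R v = y + z := by
          rw [hR_def, ContinuousLinearMap.add_apply]
          rfl
        have horth : (inner ℝ y z) = 0 := by
          apply inner_zero_of
          intro k
          by_cases h : k < m
          · have hzk : (z : ∀ _ : ℕ, ℝ) k = 0 := by
              rw [hz_def, mulOp_apply]
              have h0 : c' k = 0 := if_pos h
              rw [h0, zero_mul]
            rw [hzk, mul_zero]
          · have hyk : (y : ∀ _ : ℕ, ℝ) k = 0 := by
              rw [hy_def, incl_apply, dif_neg h]
            rw [hyk, zero_mul]
        have hyle : ‖y‖ ≤ nP * ‖projE m v‖ := by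
          rw [hy_def, norm_incl]
          exact ContinuousLinearMap.le_opNorm iPm _
        set tv := v - pr v with htv_def
        have hzt : z = mulOp c' d⁻¹ hc' tv := by
          apply lp.ext
          funext k
          rw [hz_def, mulOp_apply, mulOp_apply, htv_def, lp.coeFn_sub, Pi.sub_apply, hprco]
          by_cases h : k < m
          · have h0 : c' k = 0 := if_pos h
            rw [h0, zero_mul, zero_mul]
          · rw [if_neg h, sub_zero]
        have hzle : ‖z‖ ≤ d⁻¹ * ‖tv‖ := by
          rw [hzt]
          exact norm_mulOp_apply_le c' d⁻¹ hc' tv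
        have horth2 : (inner ℝ (pr v) tv) = 0 := by
          apply inner_zero_of
          intro k
          rw [htv_def, lp.coeFn_sub, Pi.sub_apply, hprco]
          by_cases h : k < m
          · rw [if_pos h, sub_self, mul_zero]
          · rw [if_neg h, zero_mul]
        have hsplit : ‖projE m v‖ ^ 2 + ‖tv‖ ^ 2 = ‖v‖ ^ 2 := by
          have hv : v = pr v + tv := by rw [htv_def]; abel
          have h1 : ‖v‖ ^ 2 = ‖pr v‖ ^ 2 + ‖tv‖ ^ 2 := by
            conv_lhs => rw [hv]
            exact pyth _ _ horth2
          have h2 : ‖pr v‖ = ‖projE m v‖ := by rw [← hip v, norm_incl]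
          rw [h1, h2]
        have hsq : ‖R v‖ ^ 2 ≤ (M * ‖v‖) ^ 2 := by
          have h1 : ‖R v‖ ^ 2 = ‖y‖ ^ 2 + ‖z‖ ^ 2 := by rw [hRv]; exact pyth y z horth
          have h2 : ‖y‖ ^ 2 ≤ nP ^ 2 * ‖projE m v‖ ^ 2 := by
            rw [← mul_pow]
            exact pow_le_pow_left₀ (norm_nonneg y) hyle 2
          have h3 : ‖z‖ ^ 2 ≤ d⁻¹ ^ 2 * ‖tv‖ ^ 2 := by
            rw [← mul_pow]
            exact pow_le_pow_left₀ (norm_nonneg z) hzle 2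
          have h4 : nP ^ 2 ≤ M ^ 2 := pow_le_pow_left₀ hnPpos.le (le_max_left _ _) 2
          have h5 : d⁻¹ ^ 2 ≤ M ^ 2 := pow_le_pow_left₀ (by positivity) (le_max_right _ _) 2
          calc ‖R v‖ ^ 2 = ‖y‖ ^ 2 + ‖z‖ ^ 2 := h1
          _ ≤ nP ^ 2 * ‖projE m v‖ ^ 2 + d⁻¹ ^ 2 * ‖tv‖ ^ 2 := add_le_add h2 h3
          _ ≤ M ^ 2 * ‖projE m v‖ ^ 2 + M ^ 2 * ‖tv‖ ^ 2 :=
              add_le_add (mul_le_mul_of_nonneg_right h4 (sq_nonneg _))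
                (mul_le_mul_of_nonneg_right h5 (sq_nonneg _))
          _ = M ^ 2 * (‖projE m v‖ ^ 2 + ‖tv‖ ^ 2) := by ring
          _ = (M * ‖v‖) ^ 2 := by rw [hsplit]; ring
        exact sq_le_imp (norm_nonneg _) (by positivity) hsq
      have hRge1 : nP ≤ ‖R‖ := by
        rw [hnP_def]
        apply ContinuousLinearMap.opNorm_le_bound _ (norm_nonneg R)
        intro x
        have hRι : R (incl m x) = incl m (iPm x) := by
          apply lp.ext
          funext k
          have e1 : (incl m (iPm x) : ∀ _ : ℕ, ℝ) k = if h : k < m then iPm x ⟨k, h⟩ else 0 :=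
            incl_apply m _ k
          have e2 : (incl m x : ∀ _ : ℕ, ℝ) k = if h : k < m then x ⟨k, h⟩ else 0 :=
            incl_apply m _ k
          by_cases h : k < m
          · simp only [hRco, hπι, e1, e2, dif_pos h]
            have h0 : c' k = 0 := if_pos h
            rw [h0, zero_mul, add_zero]
          · simp only [hRco, hπι, e1, e2, dif_neg h]
            rw [mul_zero, add_zero]
        calc ‖iPm x‖ = ‖incl m (iPm x)‖ := (norm_incl m _).symm
        _ = ‖R (incl m x)‖ := by rw [hRι]
        _ ≤ ‖R‖ * ‖incl m x‖ := ContinuousLinearMap.le_opNorm R _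
        _ = ‖R‖ * ‖x‖ := by rw [norm_incl]
      have hsg : ∀ (i n : ℕ) (cy : ℝ),
          (lp.single (E := fun _ : ℕ => ℝ) 2 i cy : ∀ _ : ℕ, ℝ) n
            = if n = i then cy else 0 := by
        intro i n cy
        rw [lp.single_apply]
        split <;> rename_i h
        · subst h; simp
        · simp [h]
      have hnorm1 : ∀ k : ℕ, ‖(lp.single 2 (m + k) (1 : ℝ) : ℋ)‖ = 1 := by
        intro k
        have := lp.norm_single (E := fun _ : ℕ => ℝ) (p := 2) (by norm_num) (m + k) (1 : ℝ)
        simpa using this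
      have hRsingle : ∀ k : ℕ, R (lp.single 2 (m + k) (1 : ℝ)) =
          (a (m + k))⁻¹ • lp.single 2 (m + k) (1 : ℝ) := by
        intro k
        have hπ0 : projE m (lp.single 2 (m + k) (1 : ℝ)) = 0 := by
          ext j
          rw [projE_apply, hsg]
          rw [if_neg (by omega : ¬ ((j : ℕ) = m + k))]
          rfl
        apply lp.ext
        funext n
        rw [hRco, hπ0, map_zero, lp.coeFn_smul, Pi.smul_apply, smul_eq_mul]
        by_cases h : n < m
        · rw [dif_pos h]
          have h0 : c' n = 0 := if_pos h
          rw [h0, zero_mul, add_zero, hsg, if_neg (by omega : ¬ n = m + k), mul_zero]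
          rfl
        · rw [dif_neg h, zero_add]
          have h0 : c' n = (a n)⁻¹ := if_neg h
          rw [h0, hsg]
          by_cases h2 : n = m + k
          · subst h2
            rw [if_pos rfl]
          · rw [if_neg h2, mul_zero, mul_zero]
      have hRge2 : d⁻¹ ≤ ‖R‖ := by
        have hk1 : ∀ k : ℕ, |a (m + k)|⁻¹ ≤ ‖R‖ := by
          intro k
          have h1 : ‖R (lp.single 2 (m + k) (1 : ℝ))‖ = |a (m + k)|⁻¹ := by
            rw [hRsingle, norm_smul, hnorm1, mul_one, Real.norm_eq_abs, abs_inv]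
          calc |a (m + k)|⁻¹ = ‖R (lp.single 2 (m + k) (1 : ℝ))‖ := h1.symm
          _ ≤ ‖R‖ * ‖(lp.single 2 (m + k) (1 : ℝ) : ℋ)‖ := ContinuousLinearMap.le_opNorm R _
          _ = ‖R‖ := by rw [hnorm1, mul_one]
        have hRpos : 0 < ‖R‖ := lt_of_lt_of_le (inv_pos.mpr (hpos 0)) (hk1 0)
        have hinv : ∀ k : ℕ, ‖R‖⁻¹ ≤ |a (m + k)| := fun k =>
          inv_flip_le (hpos k) (hk1 k)
        exact inv_flip_le hRpos (le_ciInf hinv)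
      have hRnorm : ‖R‖ = M := le_antisymm hRle (max_le hRge1 hRge2)
      rw [hbQ, hbPm, hRnorm, hM_def, inv_max_eq_min hnPpos (inv_pos.mpr hd0), inv_inv]
    · -- Pm not bijective
      have hbPm0 : bijMod Pm = 0 := by unfold bijMod; rw [if_neg hPmBij]
      have hQnb : ¬ Function.Bijective Q := by
        intro hQ
        apply hPmBij
        constructor
        · intro x y hxy
          have h1 : Q (incl m x) = Q (incl m y) := by rw [hQι, hQι, hxy]
          exact hιinj (hQ.injective h1)
        · intro y
          obtain ⟨v, hv⟩ := hQ.surjective (incl m y)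
          have htail : ∀ k, m ≤ k → (v : ∀ _ : ℕ, ℝ) k = 0 := by
            intro k hk
            have h1 := congrArg (fun f : ℋ => (f : ∀ _ : ℕ, ℝ) k) hv
            simp only [] at h1
            rw [hQco, dif_neg (by omega), incl_apply, dif_neg (by omega), zero_add] at h1
            have ha1 : a' k = a k := if_neg (by omega)
            rw [ha1] at h1
            exact (mul_eq_zero.mp h1).resolve_left (hak k hk)
          refine ⟨projE m v, ?_⟩
          apply hιinj
          have hpv : pr v = v := by
            apply lp.ext
            funext k
            rw [hprco]
            by_cases h : k < m
            · rw [if_pos h]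
            · rw [if_neg h]
              exact (htail k (by omega)).symm
          rw [← hQι, hip, hpv, hv]
      have hbQ0 : bijMod Q = 0 := by unfold bijMod; rw [if_neg hQnb]
      rw [hbQ0, hbPm0]
      exact (min_eq_left hd0.le).symm

  have hlip := abs_bijMod_sub_le P Q
  rw [hQbij_eq] at hlip
  calc |bijMod P - min (bijMod Pm) (⨅ k : ℕ, |a (m + k)|)| = |bijMod P - min (bijMod Pm) d| := by
        rw [hd_def]
  _ ≤ ‖P - Q‖ := hlip
  _ = ‖Q - P‖ := norm_sub_rev _ _
  _ = ‖G - Gm‖ := by rw [hQP]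
end
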